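/- arXiv:2512.10442 — 11 statements merged into one kernel-verified Lean document; each statement's English description precedes it below -/
import Mathlib

section
/- Let X and Y be Banach spaces and S : X → Y a bounded linear operator that is range strongly exposing with witness x₀ ∈ S_X, i.e. ‖Sx₀‖ = ‖S‖ and every sequence (xₙ) ⊆ B_X with ‖Sxₙ‖ → ‖S‖ has a subsequence with Sx_{σ(n)} → λ Sx₀ for some unimodular scalar λ. If z ∈ X satisfies ‖x₀ + z‖ ≤ 1 and ‖x₀ - z‖ ≤ 1, then Sz = 0. -/
open Filter Topology

section Defs

variable (𝕜 : Type*) [RCLike 𝕜]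

/-- `f` strongly exposes `x₀` in the closed unit ball: `x₀` lies in the ball, the real part of
`f` attains its maximum over the ball at `x₀`, and every maximizing sequence in the ball
converges in norm to `x₀`. -/
def StronglyExposes {X : Type*} [NormedAddCommGroup X] [NormedSpace 𝕜 X]
    (f : X →L[𝕜] 𝕜) (x₀ : X) : Prop :=
  ‖x₀‖ ≤ 1 ∧ (∀ x : X, ‖x‖ ≤ 1 → RCLike.re (f x) ≤ RCLike.re (f x₀)) ∧
    ∀ u : ℕ → X, (∀ n, ‖u n‖ ≤ 1) →
      Tendsto (fun n => RCLike.re (f (u n))) atTop (𝓝 (RCLike.re (f x₀))) →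
      Tendsto u atTop (𝓝 x₀)

/-- `x₀` is a strongly exposed point of the closed unit ball. -/
def StronglyExposedPoint {X : Type*} [NormedAddCommGroup X] [NormedSpace 𝕜 X]
    (x₀ : X) : Prop :=
  ∃ f : X →L[𝕜] 𝕜, f ≠ 0 ∧ StronglyExposes 𝕜 f x₀

variable {X Y : Type*} [NormedAddCommGroup X] [NormedSpace 𝕜 X]
  [NormedAddCommGroup Y] [NormedSpace 𝕜 Y]

/-- `S` is range strongly exposing with witness `x₀`. -/
def RSEAt (S : X →L[𝕜] Y) (x₀ : X) : Prop :=
  ‖x₀‖ = 1 ∧ ‖S x₀‖ = ‖S‖ ∧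
    ∀ u : ℕ → X, (∀ n, ‖u n‖ ≤ 1) →
      Tendsto (fun n => ‖S (u n)‖) atTop (𝓝 ‖S‖) →
      ∃ (σ : ℕ → ℕ) (l : 𝕜), StrictMono σ ∧ ‖l‖ = 1 ∧
        Tendsto (fun n => S (u (σ n))) atTop (𝓝 (l • S x₀))

/-- `S` is a range strongly exposing operator. -/
def RSE (S : X →L[𝕜] Y) : Prop := ∃ x₀ : X, RSEAt 𝕜 S x₀

/-- `S` is absolutely strongly exposing with witness `x₀`. -/
def ASEAt (S : X →L[𝕜] Y) (x₀ : X) : Prop :=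
  ‖x₀‖ = 1 ∧
    ∀ u : ℕ → X, (∀ n, ‖u n‖ ≤ 1) →
      Tendsto (fun n => ‖S (u n)‖) atTop (𝓝 ‖S‖) →
      ∃ (σ : ℕ → ℕ) (l : 𝕜), StrictMono σ ∧ ‖l‖ = 1 ∧
        Tendsto (fun n => u (σ n)) atTop (𝓝 (l • x₀))

/-- `S` is an absolutely strongly exposing operator. -/
def ASE (S : X →L[𝕜] Y) : Prop := ∃ x₀ : X, ASEAt 𝕜 S x₀

variable (X Y)

/-- The pair `(X, Y)` has the Bishop–Phelps–Bollobás property. -/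
def BPBp : Prop :=
  ∀ ε > (0:ℝ), ∃ η : ℝ, 0 < η ∧ η < ε ∧
    ∀ T : X →L[𝕜] Y, ‖T‖ = 1 → ∀ x : X, ‖x‖ = 1 → 1 - η < ‖T x‖ →
      ∃ (S : X →L[𝕜] Y) (x₀ : X), ‖x₀‖ = 1 ∧ ‖S‖ = 1 ∧ ‖S x₀‖ = 1 ∧
        ‖S - T‖ < ε ∧ ‖x - x₀‖ < ε

/-- The pair `(X, Y)` has the Bishop–Phelps–Bollobás property for range strongly
exposing operators. -/
def BPBpRSE : Prop :=
  ∀ ε > (0:ℝ), ∃ η : ℝ, 0 < η ∧ η < ε ∧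
    ∀ T : X →L[𝕜] Y, ‖T‖ = 1 → ∀ x : X, ‖x‖ = 1 → 1 - η < ‖T x‖ →
      ∃ (S : X →L[𝕜] Y) (x₀ : X), RSE 𝕜 S ∧ ‖x₀‖ = 1 ∧ ‖S‖ = 1 ∧ ‖S x₀‖ = 1 ∧
        ‖S - T‖ < ε ∧ ‖x - x₀‖ < ε

/-- The pair `(X, Y)` has the Bishop–Phelps–Bollobás property for absolutely strongly
exposing operators. -/
def BPBpASE : Prop :=
  ∀ ε > (0:ℝ), ∃ η : ℝ, 0 < η ∧ η < ε ∧
    ∀ T : X →L[𝕜] Y, ‖T‖ = 1 → ∀ x : X, ‖x‖ = 1 → 1 - η < ‖T x‖ →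
      ∃ (S : X →L[𝕜] Y) (x₀ : X), ASE 𝕜 S ∧ ‖x₀‖ = 1 ∧ ‖S‖ = 1 ∧ ‖S x₀‖ = 1 ∧
        ‖S - T‖ < ε ∧ ‖x - x₀‖ < ε

/-- The pair `(X, Y)` has the BPBp-RSE with a prescribed function `η`. -/
def BPBpRSEWith (η : ℝ → ℝ) : Prop :=
  ∀ ε ∈ Set.Ioo (0:ℝ) 1,
    ∀ T : X →L[𝕜] Y, ‖T‖ = 1 → ∀ x : X, ‖x‖ = 1 → 1 - η ε < ‖T x‖ →
      ∃ (S : X →L[𝕜] Y) (x₀ : X), RSE 𝕜 S ∧ ‖x₀‖ = 1 ∧ ‖S‖ = 1 ∧ ‖S x₀‖ = 1 ∧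
        ‖S - T‖ < ε ∧ ‖x - x₀‖ < ε

end Defs

/-- `Y` is a ℂ-uniformly convex complex normed space. -/
def CUniformConvex (Y : Type*) [NormedAddCommGroup Y] [NormedSpace ℂ Y] : Prop :=
  ∀ ε > (0:ℝ), ∃ δ > (0:ℝ), ∀ y₀ y₁ : Y,
    (∀ w : ℂ, ‖w‖ = 1 → ‖y₀ + w • y₁‖ ≤ 1) → ε < ‖y₁‖ → ‖y₀‖ < 1 - δ

theorem stmt_2 {𝕜 X Y : Type*} [RCLike 𝕜] [NormedAddCommGroup X] [NormedSpace 𝕜 X]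
    [NormedAddCommGroup Y] [NormedSpace 𝕜 Y] [CompleteSpace X] [CompleteSpace Y]
    (S : X →L[𝕜] Y) (x₀ : X) (h : RSEAt 𝕜 S x₀)
    (z : X) (h1 : ‖x₀ + z‖ ≤ 1) (h2 : ‖x₀ - z‖ ≤ 1) : S z = 0 := by

  obtain ⟨hx1, hx2, hseq⟩ := h
  by_cases hS : S x₀ = 0
  · have hSnorm : ‖S‖ = 0 := by rw [← hx2, hS, norm_zero]
    have hS0 : S = 0 := by rwa [norm_eq_zero] at hSnorm
    simp [hS0]
  have key : ∀ v : X, ‖v‖ ≤ 1 → ‖S v‖ = ‖S‖ → ∃ l : 𝕜, ‖l‖ = 1 ∧ S v = l • S x₀ := by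
    intro v hv hnorm
    obtain ⟨σ, l, hσ, hl, hlim⟩ := hseq (fun _ => v) (fun _ => hv)
      (by simpa [hnorm] using (tendsto_const_nhds : Tendsto (fun _ : ℕ => ‖S v‖) atTop _))
    exact ⟨l, hl, tendsto_nhds_unique (tendsto_const_nhds) hlim⟩
  have hle1 : ‖S (x₀ + z)‖ ≤ ‖S‖ := by
    calc ‖S (x₀ + z)‖ ≤ ‖S‖ * ‖x₀ + z‖ := S.le_opNorm _
    _ ≤ ‖S‖ * 1 := by exact mul_le_mul_of_nonneg_left h1 (norm_nonneg S)
    _ = ‖S‖ := mul_one _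
  have hle2 : ‖S (x₀ - z)‖ ≤ ‖S‖ := by
    calc ‖S (x₀ - z)‖ ≤ ‖S‖ * ‖x₀ - z‖ := S.le_opNorm _
    _ ≤ ‖S‖ * 1 := by exact mul_le_mul_of_nonneg_left h2 (norm_nonneg S)
    _ = ‖S‖ := mul_one _
  have hsum : 2 * ‖S‖ ≤ ‖S (x₀ + z)‖ + ‖S (x₀ - z)‖ := by
    have : S (x₀ + z) + S (x₀ - z) = (2:𝕜) • S x₀ := by
      simp [map_add, map_sub, two_smul]
    calc 2 * ‖S‖ = ‖(2:𝕜) • S x₀‖ := by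
          rw [norm_smul, ← hx2]
          norm_num
    _ = ‖S (x₀ + z) + S (x₀ - z)‖ := by rw [this]
    _ ≤ ‖S (x₀ + z)‖ + ‖S (x₀ - z)‖ := norm_add_le _ _
  have he1 : ‖S (x₀ + z)‖ = ‖S‖ := le_antisymm hle1 (by linarith)
  have he2 : ‖S (x₀ - z)‖ = ‖S‖ := le_antisymm hle2 (by linarith)
  obtain ⟨l₁, hl₁, heq₁⟩ := key _ h1 he1
  obtain ⟨l₂, hl₂, heq₂⟩ := key _ h2 he2
  have hsum2 : (l₁ + l₂) • S x₀ = (2:𝕜) • S x₀ := by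
    have : S (x₀ + z) + S (x₀ - z) = (2:𝕜) • S x₀ := by
      simp [map_add, map_sub, two_smul]
    rw [← this, heq₁, heq₂, add_smul]
  have hll : l₁ + l₂ = 2 := by
    by_contra hne
    have : (l₁ + l₂ - 2) • S x₀ = 0 := by rw [sub_smul, hsum2, sub_self]
    rcases smul_eq_zero.mp this with h' | h'
    · exact hne (sub_eq_zero.mp h')
    · exact hS h'
  have hre1 : RCLike.re l₁ ≤ 1 := hl₁ ▸ RCLike.re_le_norm l₁
  have hre2 : RCLike.re l₂ ≤ 1 := hl₂ ▸ RCLike.re_le_norm l₂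
  have hresum : RCLike.re l₁ + RCLike.re l₂ = 2 := by
    have := congrArg RCLike.re hll
    simpa [map_add] using this
  have hre1' : RCLike.re l₁ = 1 := by linarith
  have him1 : RCLike.im l₁ = 0 := by
    have hns : RCLike.re l₁ ^ 2 + RCLike.im l₁ ^ 2 = 1 := by
      have hd := RCLike.norm_sq_eq_def (z := l₁)
      rw [hl₁] at hd
      nlinarith [hd]
    nlinarith [sq_nonneg (RCLike.im l₁)]
  have hl1 : l₁ = 1 := by
    apply RCLike.ext <;> simp [hre1', him1]
  have : S (x₀ + z) = S x₀ := by rw [heq₁, hl1, one_smul]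
  have hadd : S x₀ + S z = S x₀ := by rw [← map_add]; exact this
  have := add_left_cancel (a := S x₀) (b := S z) (c := 0) (by simpa using hadd)
  exact this
end

section
/- Let X and Y be Banach spaces and T : X → Y an absolutely strongly exposing operator with witness x₀ ∈ S_X satisfying ‖Tx₀‖ = ‖T‖. Then for any y₀* ∈ S_{Y*} with Re y₀*(Tx₀) = ‖T‖, the functional T*y₀* strongly exposes x₀ in B_X. -/
open Filter Topology

theorem stmt_3 {𝕜 X Y : Type*} [RCLike 𝕜] [NormedAddCommGroup X] [NormedSpace 𝕜 X]
    [NormedAddCommGroup Y] [NormedSpace 𝕜 Y] [CompleteSpace X] [CompleteSpace Y]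
    (T : X →L[𝕜] Y) (x₀ : X) (hASE : ASEAt 𝕜 T x₀) (hTx₀ : ‖T x₀‖ = ‖T‖)
    (g : Y →L[𝕜] 𝕜) (hg : ‖g‖ = 1) (hgT : RCLike.re (g (T x₀)) = ‖T‖) :
    StronglyExposes 𝕜 (g.comp T) x₀ := by
  obtain ⟨hx₀, hseq⟩ := hASE
  -- ‖T‖ > 0
  have hT0 : 0 < ‖T‖ := by
    rcases lt_or_eq_of_le (norm_nonneg T) with h | h
    · exact h
    · exfalso
      have hz : Tendsto (fun _ : ℕ => ‖T ((fun _ => (0:X)) 0)‖) atTop (𝓝 ‖T‖) := by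
        simp only [map_zero, norm_zero]
        rw [← h]
        exact tendsto_const_nhds
      obtain ⟨σ, l, hσ, hl, hlim⟩ := hseq (fun _ => 0) (fun n => by simp) hz
      have := tendsto_nhds_unique hlim tendsto_const_nhds
      have : ‖l • x₀‖ = 0 := by rw [this, norm_zero]
      rw [norm_smul, hl, hx₀] at this; norm_num at this
  -- bound: re (g y) ≤ ‖y‖
  have hre_le : ∀ y : Y, RCLike.re (g y) ≤ ‖y‖ := fun y => by
    calc RCLike.re (g y) ≤ |RCLike.re (g y)| := le_abs_self _
    _ ≤ ‖g y‖ := RCLike.abs_re_le_norm _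
    _ ≤ ‖g‖ * ‖y‖ := g.le_opNorm y
    _ = ‖y‖ := by rw [hg, one_mul]
  have hbound : ∀ x : X, ‖x‖ ≤ 1 → RCLike.re (g (T x)) ≤ ‖T‖ := fun x hx => by
    calc RCLike.re (g (T x)) ≤ ‖T x‖ := hre_le _
    _ ≤ ‖T‖ * ‖x‖ := T.le_opNorm x
    _ ≤ ‖T‖ * 1 := by gcongr
    _ = ‖T‖ := mul_one _
  -- g (T x₀) = ‖T‖
  have hgTx : g (T x₀) = (‖T‖ : 𝕜) := by
    have h1 : ‖g (T x₀)‖ ≤ ‖T‖ := by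
      calc ‖g (T x₀)‖ ≤ ‖g‖ * ‖T x₀‖ := g.le_opNorm _
      _ = ‖T‖ := by rw [hg, one_mul, hTx₀]
    have h2 : ‖g (T x₀)‖ ^ 2 = RCLike.re (g (T x₀)) * RCLike.re (g (T x₀))
        + RCLike.im (g (T x₀)) * RCLike.im (g (T x₀)) := RCLike.norm_sq_eq_def
    have him : RCLike.im (g (T x₀)) = 0 := by
      nlinarith [sq_nonneg (RCLike.im (g (T x₀))), norm_nonneg (g (T x₀))]
    apply RCLike.ext <;> simp [hgT, him]
  refine ⟨hx₀.le, fun x hx => ?_, fun u hu htend => ?_⟩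
  · simpa [hgT] using hbound x hx
  · simp only [ContinuousLinearMap.comp_apply, hgT] at htend ⊢
    -- ‖T (u n)‖ → ‖T‖ by squeeze
    have hTu : Tendsto (fun n => ‖T (u n)‖) atTop (𝓝 ‖T‖) := by
      refine tendsto_of_tendsto_of_tendsto_of_le_of_le htend tendsto_const_nhds
        (fun n => hre_le _) (fun n => ?_)
      calc ‖T (u n)‖ ≤ ‖T‖ * ‖u n‖ := T.le_opNorm _
      _ ≤ ‖T‖ * 1 := by gcongr; exact hu n
      _ = ‖T‖ := mul_one _
    refine tendsto_of_subseq_tendsto fun ns hns => ?_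
    obtain ⟨σ, l, hσ, hl, hlim⟩ := hseq (fun n => u (ns n)) (fun n => hu _)
      (hTu.comp hns)
    refine ⟨σ, ?_⟩
    have hl1 : l = 1 := by
      have h1 : Tendsto (fun n => RCLike.re (g (T (u (ns (σ n)))))) atTop (𝓝 ‖T‖) :=
        htend.comp (hns.comp hσ.tendsto_atTop)
      have h2 : Tendsto (fun n => RCLike.re (g (T (u (ns (σ n)))))) atTop
          (𝓝 (RCLike.re (g (T (l • x₀))))) := by
        have : Continuous fun z : X => RCLike.re (g (T z)) :=
          RCLike.continuous_re.comp (g.continuous.comp T.continuous)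
        exact (this.tendsto _).comp hlim
      have heq : RCLike.re (g (T (l • x₀))) = ‖T‖ := tendsto_nhds_unique h2 h1
      have hrel : RCLike.re l = 1 := by
        have : RCLike.re (l * (‖T‖ : 𝕜)) = ‖T‖ := by
          simpa [map_smul, smul_eq_mul, hgTx] using heq
        rw [mul_comm, RCLike.re_ofReal_mul] at this
        field_simp at this
        exact this
      have hnl : ‖l‖ ^ 2 = RCLike.re l * RCLike.re l + RCLike.im l * RCLike.im l :=
        RCLike.norm_sq_eq_def
      rw [hl, hrel] at hnl
      have him : RCLike.im l = 0 := by nlinarith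
      apply RCLike.ext <;> simp [hrel, him]
    rw [hl1, one_smul] at hlim
    exact hlim
end

section
/- Let X be a uniformly convex Banach space and m ∈ ℕ. A point x in the unit sphere of the ℓ∞-sum of m copies of X is a strongly exposed point of the unit ball if and only if ‖x(i)‖ = 1 for every i = 1, …, m. -/
open Filter Topology

lemma uc_strongly_exposes {𝕜 X : Type*} [RCLike 𝕜] [NormedAddCommGroup X] [NormedSpace 𝕜 X]
    [UniformConvexSpace X] (g : X →L[𝕜] 𝕜) (hg : ‖g‖ = 1) (a : X) (ha : ‖a‖ ≤ 1)
    (hga : RCLike.re (g a) = 1) (v : ℕ → X) (hv : ∀ n, ‖v n‖ ≤ 1)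
    (hre : Tendsto (fun n => RCLike.re (g (v n))) atTop (𝓝 1)) :
    Tendsto v atTop (𝓝 a) := by
  letI : NormedSpace ℝ X := NormedSpace.restrictScalars ℝ 𝕜 X
  rw [Metric.tendsto_atTop]
  intro ε hε
  obtain ⟨δ, hδ, H⟩ := exists_forall_closed_ball_dist_add_le_two_sub X hε
  have hev : ∀ᶠ n in atTop, 1 - δ < RCLike.re (g (v n)) :=
    hre.eventually (eventually_gt_nhds (by linarith))
  obtain ⟨N, hN⟩ := hev.exists_forall_of_atTop
  refine ⟨N, fun n hn => ?_⟩
  by_contra hcon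
  push_neg at hcon
  have h1 : ε ≤ ‖v n - a‖ := by rwa [dist_eq_norm] at hcon
  have h2 : ‖v n + a‖ ≤ 2 - δ := H (hv n) ha h1
  have h3 : RCLike.re (g (v n + a)) ≤ ‖v n + a‖ := by
    calc RCLike.re (g (v n + a)) ≤ |RCLike.re (g (v n + a))| := le_abs_self _
    _ ≤ ‖g (v n + a)‖ := RCLike.abs_re_le_norm _
    _ ≤ ‖g‖ * ‖v n + a‖ := g.le_opNorm _
    _ = ‖v n + a‖ := by rw [hg, one_mul]
  rw [map_add, map_add] at h3
  have := hN n hn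
  linarith

theorem stmt_4 {𝕜 X : Type*} [RCLike 𝕜] [NormedAddCommGroup X] [NormedSpace 𝕜 X]
    [CompleteSpace X] [UniformConvexSpace X] (m : ℕ)
    (x : PiLp ⊤ (fun _ : Fin m => X)) (hx : ‖x‖ = 1) :
    StronglyExposedPoint 𝕜 x ↔ ∀ i : Fin m, ‖x i‖ = 1 := by
  have hm : 0 < m := by
    rcases Nat.eq_zero_or_pos m with hm | hm
    · subst hm
      have hx0 : x = 0 := PiLp.ext fun i => i.elim0
      rw [hx0, norm_zero] at hx
      norm_num at hx
    · exact hm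
  haveI : Nonempty (Fin m) := ⟨⟨0, hm⟩⟩
  -- coordinate norm bounds
  have hcoord : ∀ (y : PiLp ⊤ (fun _ : Fin m => X)) (i : Fin m), ‖y i‖ ≤ ‖y‖ := by
    intro y i
    rw [PiLp.norm_eq_ciSup]
    exact le_ciSup (f := fun j => ‖y j‖) (Set.Finite.bddAbove (Set.finite_range _)) i
  have hnormle : ∀ (y : PiLp ⊤ (fun _ : Fin m => X)), (∀ i, ‖y i‖ ≤ 1) → ‖y‖ ≤ 1 := by
    intro y hy
    rw [PiLp.norm_eq_ciSup]
    exact ciSup_le hy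
  constructor
  · rintro ⟨f, hf0, hx1, hmax, hseq⟩ i
    by_contra hne
    have hilt : ‖x i‖ < 1 := lt_of_le_of_ne ((hcoord x i).trans_eq hx) hne
    -- a nonzero coordinate exists
    have hxne : x ≠ 0 := by intro h; rw [h, norm_zero] at hx; norm_num at hx
    obtain ⟨k, hk⟩ : ∃ k, x k ≠ 0 := by
      by_contra h
      push_neg at h
      exact hxne (PiLp.ext h)
    set v : X := ((‖x k‖ : 𝕜))⁻¹ • x k with hv
    have hvnorm : ‖v‖ = 1 := by
      rw [hv, norm_smul, norm_inv, RCLike.norm_ofReal, abs_norm, inv_mul_cancel₀ (norm_ne_zero_iff.2 hk)]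
    set ε : ℝ := 1 - ‖x i‖ with hε
    have hεpos : 0 < ε := by rw [hε]; linarith
    set d : PiLp ⊤ (fun _ : Fin m => X) := WithLp.toLp ⊤ (Pi.single i ((ε : 𝕜) • v)) with hd
    have hdi : d i = (ε : 𝕜) • v := by rw [hd]; simp
    have hdj : ∀ j, j ≠ i → d j = 0 := by intro j hj; rw [hd]; simp [Pi.single_eq_of_ne hj]
    have hynorm : ‖x + d‖ ≤ 1 := by
      apply hnormle
      intro j
      rcases eq_or_ne j i with rfl | hj
      · rw [PiLp.add_apply, hdi]
        calc ‖x j + (ε : 𝕜) • v‖ ≤ ‖x j‖ + ‖(ε : 𝕜) • v‖ := norm_add_le _ _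
        _ = ‖x j‖ + ε := by
          rw [norm_smul, hvnorm, RCLike.norm_ofReal, abs_of_pos hεpos, mul_one]
        _ = 1 := by rw [hε]; ring
      · rw [PiLp.add_apply, hdj j hj, add_zero]
        exact (hcoord x j).trans_eq hx
    have hznorm : ‖x - d‖ ≤ 1 := by
      apply hnormle
      intro j
      rcases eq_or_ne j i with rfl | hj
      · rw [PiLp.sub_apply, hdi]
        calc ‖x j - (ε : 𝕜) • v‖ ≤ ‖x j‖ + ‖(ε : 𝕜) • v‖ := norm_sub_le _ _
        _ = ‖x j‖ + ε := by
          rw [norm_smul, hvnorm, RCLike.norm_ofReal, abs_of_pos hεpos, mul_one]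
        _ = 1 := by rw [hε]; ring
      · rw [PiLp.sub_apply, hdj j hj, sub_zero]
        exact (hcoord x j).trans_eq hx
    have hsum : RCLike.re (f (x + d)) + RCLike.re (f (x - d)) = 2 * RCLike.re (f x) := by
      rw [map_add, map_sub, map_add, map_sub]
      ring
    have hy_le := hmax _ hynorm
    have hz_le := hmax _ hznorm
    have hy_eq : RCLike.re (f (x + d)) = RCLike.re (f x) := by linarith
    have : Tendsto (fun _ : ℕ => (x + d)) atTop (𝓝 x) :=
      hseq (fun _ => x + d) (fun _ => hynorm) (by simpa only [hy_eq] using tendsto_const_nhds)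
    have hxd : x + d = x := tendsto_nhds_unique tendsto_const_nhds this
    have hd0 : d = 0 := by
      have := congrArg (· - x) hxd
      simpa [add_sub_cancel_left] using this
    have hdiz : d i = 0 := by rw [hd0]; rfl
    rw [hdi] at hdiz
    have hz2 : ‖(ε : 𝕜) • v‖ = 0 := by rw [hdiz, norm_zero]
    rw [norm_smul, hvnorm, mul_one, RCLike.norm_ofReal, abs_of_pos hεpos] at hz2
    linarith
  · intro h
    -- choose norming functionals
    have hne : ∀ i : Fin m, x i ≠ 0 := fun i => by
      intro hz
      have hi := h i
      rw [hz, norm_zero] at hi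
      exact one_ne_zero hi.symm
    choose g hg1 hg2 using fun i => exists_dual_vector 𝕜 (x i) (norm_ne_zero_iff.2 (hne i))
    -- the exposing functional
    set F : PiLp ⊤ (fun _ : Fin m => X) →L[𝕜] 𝕜 :=
      ∑ i : Fin m, (g i).comp (PiLp.proj ⊤ (fun _ : Fin m => X) i) with hF
    have hFapp : ∀ y : PiLp ⊤ (fun _ : Fin m => X), F y = ∑ i : Fin m, g i (y i) := by
      intro y
      rw [hF]
      simp [ContinuousLinearMap.sum_apply]
    have hgx : ∀ i : Fin m, g i (x i) = 1 := by
      intro i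
      rw [hg2 i, h i, RCLike.ofReal_one]
    have hFx : F x = (m : 𝕜) := by
      rw [hFapp]
      simp [hgx]
    have hFxre : RCLike.re (F x) = (m : ℝ) := by rw [hFx]; simp
    have hterm_le : ∀ (y : PiLp ⊤ (fun _ : Fin m => X)), ‖y‖ ≤ 1 →
        ∀ i : Fin m, RCLike.re (g i (y i)) ≤ 1 := by
      intro y hy i
      calc RCLike.re (g i (y i)) ≤ |RCLike.re (g i (y i))| := le_abs_self _
      _ ≤ ‖g i (y i)‖ := RCLike.abs_re_le_norm _
      _ ≤ ‖g i‖ * ‖y i‖ := (g i).le_opNorm _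
      _ ≤ 1 := by rw [hg1 i, one_mul]; exact (hcoord y i).trans hy
    have hFre : ∀ (y : PiLp ⊤ (fun _ : Fin m => X)),
        RCLike.re (F y) = ∑ i : Fin m, RCLike.re (g i (y i)) := by
      intro y
      rw [hFapp, map_sum]
    refine ⟨F, ?_, hx.le, ?_, ?_⟩
    · intro hF0
      rw [hF0] at hFx
      simp only [ContinuousLinearMap.zero_apply] at hFx
      have : (m : 𝕜) = 0 := hFx.symm
      rw [Nat.cast_eq_zero] at this
      omega
    · intro y hy
      rw [hFxre, hFre]
      calc ∑ i : Fin m, RCLike.re (g i (y i)) ≤ ∑ _i : Fin m, (1 : ℝ) :=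
        Finset.sum_le_sum fun i _ => hterm_le y hy i
      _ = (m : ℝ) := by simp
    · intro u hu htend
      rw [hFxre] at htend
      -- show each coordinate tends to 1 in re
      have hcoordtend : ∀ i : Fin m, Tendsto (fun n => RCLike.re (g i (u n i))) atTop (𝓝 1) := by
        intro i
        have hlower : ∀ n, (fun n => RCLike.re (F (u n))) n - ((m : ℝ) - 1) ≤
            RCLike.re (g i (u n i)) := by
          intro n
          have hsplit : RCLike.re (F (u n)) = RCLike.re (g i (u n i)) +
              ∑ j ∈ Finset.univ.erase i, RCLike.re (g j (u n j)) := by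
            rw [hFre, ← Finset.add_sum_erase _ _ (Finset.mem_univ i)]
          have hrest : ∑ j ∈ Finset.univ.erase i, RCLike.re (g j (u n j)) ≤ ((m : ℝ) - 1) := by
            calc ∑ j ∈ Finset.univ.erase i, RCLike.re (g j (u n j))
                ≤ ∑ _j ∈ Finset.univ.erase i, (1 : ℝ) :=
              Finset.sum_le_sum fun j _ => hterm_le (u n) (hu n) j
            _ = ((m : ℝ) - 1) := by
              rw [Finset.sum_const, Finset.card_erase_of_mem (Finset.mem_univ i)]
              simp [Nat.cast_sub hm]
          simp only
          linarith
        have hupper : ∀ n, RCLike.re (g i (u n i)) ≤ 1 := fun n => hterm_le (u n) (hu n) i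
        have hlow : Tendsto (fun n => RCLike.re (F (u n)) - ((m : ℝ) - 1)) atTop (𝓝 1) := by
          have := htend.sub_const ((m : ℝ) - 1)
          simpa using this
        exact tendsto_of_tendsto_of_tendsto_of_le_of_le hlow tendsto_const_nhds hlower hupper
      -- coordinatewise convergence of u to x
      have hconv : ∀ i : Fin m, Tendsto (fun n => u n i) atTop (𝓝 (x i)) := by
        intro i
        refine uc_strongly_exposes (g i) (hg1 i) (x i) ((h i).le) ?_ _ ?_ (hcoordtend i)
        · rw [hgx i]; simp
        · intro n; exact (hcoord (u n) i).trans (hu n)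
      -- conclude convergence in PiLp ∞
      have : Tendsto (fun n => (PiLp.continuousLinearEquiv ⊤ 𝕜 (fun _ : Fin m => X)) (u n))
          atTop (𝓝 ((PiLp.continuousLinearEquiv ⊤ 𝕜 (fun _ : Fin m => X)) x)) := by
        rw [tendsto_pi_nhds]
        intro i
        exact hconv i
      have := ((PiLp.continuousLinearEquiv ⊤ 𝕜 (fun _ : Fin m => X)).symm.continuous.tendsto _).comp this
      simpa [Function.comp_def] using this
end

section
/- A complex Banach space Y that is ℂ-uniformly convex does not contain an isomorphic copy of c₀; consequently every bounded linear operator from c₀ to Y is compact. -/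
open Filter Topology

namespace StmtAux

noncomputable section

open Finset

abbrev c0 : Type := ZeroAtInftyContinuousMap ℕ ℂ

def mkFin (g : ℕ → ℂ) (N : ℕ) (hg : ∀ k, N ≤ k → g k = 0) : c0 :=
  ⟨⟨g, continuous_of_discreteTopology⟩, by
    rw [cocompact_eq_atTop]
    exact tendsto_const_nhds.congr'
      (by filter_upwards [eventually_ge_atTop N] with k hk using (hg k hk).symm)⟩

@[simp] lemma mkFin_apply (g : ℕ → ℂ) (N : ℕ) (hg : ∀ k, N ≤ k → g k = 0) (k : ℕ) :
    mkFin g N hg k = g k := rfl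

lemma c0_apply_le_norm (f : c0) (k : ℕ) : ‖f k‖ ≤ ‖f‖ := by
  rw [← ZeroAtInftyContinuousMap.norm_toBCF_eq_norm]
  exact f.toBCF.norm_coe_le_norm k

lemma c0_norm_le (f : c0) {C : ℝ} (hC : 0 ≤ C) (h : ∀ k, ‖f k‖ ≤ C) : ‖f‖ ≤ C := by
  rw [← ZeroAtInftyContinuousMap.norm_toBCF_eq_norm]
  exact (BoundedContinuousFunction.norm_le hC).mpr h

/-- truncation to coordinates `< n` -/
def truncL (n : ℕ) : c0 →L[ℂ] c0 :=
  LinearMap.mkContinuous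
    { toFun := fun f => mkFin (fun k => if k < n then f k else 0) n
        (fun k hk => if_neg (Nat.not_lt.mpr hk))
      map_add' := fun f g => by
        apply ZeroAtInftyContinuousMap.ext; intro k
        simp only [mkFin_apply, ZeroAtInftyContinuousMap.add_apply]
        split <;> simp
      map_smul' := fun c f => by
        apply ZeroAtInftyContinuousMap.ext; intro k
        simp only [mkFin_apply, ZeroAtInftyContinuousMap.smul_apply, RingHom.id_apply]
        split <;> simp }
    1
    (fun f => by
      rw [one_mul]
      apply c0_norm_le _ (norm_nonneg f)
      intro k
      simp only [LinearMap.coe_mk, AddHom.coe_mk, mkFin_apply]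
      split
      · exact c0_apply_le_norm f k
      · simp [norm_nonneg f])

@[simp] lemma truncL_apply (n : ℕ) (f : c0) (k : ℕ) :
    truncL n f k = if k < n then f k else 0 := rfl

lemma norm_truncL_le (n : ℕ) (f : c0) : ‖truncL n f‖ ≤ ‖f‖ := by
  simpa using (truncL n).le_of_opNorm_le (LinearMap.mkContinuous_norm_le _ zero_le_one _) f

def ee (i : ℕ) : c0 :=
  mkFin (fun k => if k = i then 1 else 0) (i + 1)
    (fun k hk => if_neg (by omega))

@[simp] lemma ee_apply (i k : ℕ) : ee i k = if k = i then 1 else 0 := rfl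

lemma norm_ee (i : ℕ) : ‖ee i‖ = 1 := by
  apply le_antisymm
  · apply c0_norm_le _ zero_le_one
    intro k
    simp only [ee_apply]
    split <;> norm_num
  · have := c0_apply_le_norm (ee i) i
    simpa using this

lemma c0_norm_smul (c : ℂ) (g : c0) : ‖c • g‖ = ‖c‖ * ‖g‖ := by
  rw [← ZeroAtInftyContinuousMap.norm_toBCF_eq_norm,
    ← ZeroAtInftyContinuousMap.norm_toBCF_eq_norm (f := g)]
  exact norm_smul c g.toBCF

lemma c0_sum_apply {s : Finset ℕ} (g : ℕ → c0) (k : ℕ) :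
    (∑ i ∈ s, g i) k = ∑ i ∈ s, g i k := by
  classical
  induction s using Finset.induction with
  | empty => simp
  | insert _ _ hi ih => simp [Finset.sum_insert hi, ih]

lemma truncL_eq_sum (n : ℕ) (f : c0) :
    truncL n f = ∑ i ∈ Finset.range n, f i • ee i := by
  apply ZeroAtInftyContinuousMap.ext; intro k
  rw [c0_sum_apply]
  simp only [ZeroAtInftyContinuousMap.smul_apply, ee_apply, smul_eq_mul, mul_ite, mul_one,
    mul_zero, truncL_apply]
  rw [Finset.sum_ite_eq (Finset.range n) k f]
  simp [Finset.mem_range]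

/-- sup-norm bound for unimodular combinations of disjointly supported functions -/
lemma norm_sum_le_one (f : ℕ → c0) (hf1 : ∀ i, ‖f i‖ ≤ 1)
    (hd : ∀ i j, i ≠ j → ∀ k, f i k = 0 ∨ f j k = 0)
    (m : ℕ) (w : ℕ → ℂ) (hw : ∀ i, ‖w i‖ = 1) :
    ‖∑ i ∈ Finset.range m, w i • f i‖ ≤ 1 := by
  apply c0_norm_le _ zero_le_one
  intro k
  rw [c0_sum_apply]
  by_cases hex : ∃ i ∈ Finset.range m, f i k ≠ 0
  · obtain ⟨i₀, hi₀m, hi₀⟩ := hex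
    rw [Finset.sum_eq_single i₀]
    · rw [ZeroAtInftyContinuousMap.smul_apply, norm_smul, hw i₀, one_mul]
      exact le_trans (c0_apply_le_norm _ k) (hf1 i₀)
    · intro j hj hne
      rcases hd j i₀ hne k with h0 | h0
      · simp [h0]
      · exact absurd h0 hi₀
    · intro hc; exact absurd hi₀m hc
  · push_neg at hex
    rw [Finset.sum_eq_zero]
    · simp
    · intro i hi; simp [hex i hi]

lemma hbd_of {Y : Type*} [NormedAddCommGroup Y] [NormedSpace ℂ Y]
    (T : c0 →L[ℂ] Y) (f : ℕ → c0) (hf1 : ∀ i, ‖f i‖ ≤ 1)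
    (hd : ∀ i j, i ≠ j → ∀ k, f i k = 0 ∨ f j k = 0)
    (m : ℕ) (w : ℕ → ℂ) (hw : ∀ i, ‖w i‖ = 1) :
    ‖∑ i ∈ Finset.range m, w i • T (f i)‖ ≤ ‖T‖ + 1 := by
  have heq : ∑ i ∈ Finset.range m, w i • T (f i) = T (∑ i ∈ Finset.range m, w i • f i) := by
    rw [map_sum]
    exact Finset.sum_congr rfl (fun i _ => (T.map_smul _ _).symm)
  rw [heq]
  calc ‖T (∑ i ∈ Finset.range m, w i • f i)‖
      ≤ ‖T‖ * ‖∑ i ∈ Finset.range m, w i • f i‖ := T.le_opNorm _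
    _ ≤ ‖T‖ * 1 := mul_le_mul_of_nonneg_left (norm_sum_le_one f hf1 hd m w hw) (norm_nonneg T)
    _ ≤ ‖T‖ + 1 := by linarith [norm_nonneg T]

/-- The key iteration using ℂ-uniform convexity. -/
lemma core {Y : Type*} [NormedAddCommGroup Y] [NormedSpace ℂ Y]
    (h : ∀ ε > (0:ℝ), ∃ δ > (0:ℝ), ∀ y₀ y₁ : Y,
      (∀ w : ℂ, ‖w‖ = 1 → ‖y₀ + w • y₁‖ ≤ 1) → ε < ‖y₁‖ → ‖y₀‖ < 1 - δ)
    (B c : ℝ) (hB : 0 < B) (hc : 0 < c)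
    (y : ℕ → Y) (hy : ∀ i, c ≤ ‖y i‖)
    (hbd : ∀ (m : ℕ) (w : ℕ → ℂ), (∀ i, ‖w i‖ = 1) →
      ‖∑ i ∈ Finset.range m, w i • y i‖ ≤ B) : False := by
  have hε : (0:ℝ) < c / (2 * B) := by positivity
  obtain ⟨δ₀, hδ₀, hδ⟩ := h (c / (2 * B)) hε
  set δ : ℝ := min δ₀ (1/2) with hδdef
  have hδpos : 0 < δ := lt_min hδ₀ (by norm_num)
  have hδlt1 : δ < 1 := lt_of_le_of_lt (min_le_right _ _) (by norm_num)
  have key : ∀ (K m : ℕ) (w : ℕ → ℂ), (∀ i, ‖w i‖ = 1) →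
      ‖∑ i ∈ Finset.range m, w i • y i‖ ≤ (1 - δ)^K * B := by
    intro K
    induction K with
    | zero => simpa using hbd
    | succ K ih =>
      intro m w hw
      set M : ℝ := (1 - δ)^K * B with hM
      have hMpos : 0 < M := mul_pos (pow_pos (by linarith) _) hB
      have h1 : ∀ u : ℂ, ‖u‖ = 1 →
          ‖(M⁻¹ • ∑ i ∈ Finset.range m, w i • y i) + u • (M⁻¹ • y m)‖ ≤ 1 := by
        intro u hu
        have := ih (m + 1) (Function.update w m u) (fun i => by
          rcases eq_or_ne i m with rfl | hne
          · simp [hu]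
          · simp [Function.update_of_ne hne, hw i])
        rw [Finset.sum_range_succ] at this
        have heq : ∑ i ∈ Finset.range m, Function.update w m u i • y i
            = ∑ i ∈ Finset.range m, w i • y i := by
          apply Finset.sum_congr rfl
          intro i hi
          rw [Function.update_of_ne (by simpa using Finset.mem_range.mp hi |>.ne)]
        rw [heq, Function.update_self] at this
        calc ‖(M⁻¹ • ∑ i ∈ Finset.range m, w i • y i) + u • (M⁻¹ • y m)‖
            = ‖M⁻¹ • ((∑ i ∈ Finset.range m, w i • y i) + u • y m)‖ := by
              rw [smul_add]; congr 2; rw [smul_comm]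
          _ = M⁻¹ * ‖(∑ i ∈ Finset.range m, w i • y i) + u • y m‖ := by
              rw [norm_smul, Real.norm_eq_abs, abs_of_pos (inv_pos.mpr hMpos)]
          _ ≤ M⁻¹ * M := mul_le_mul_of_nonneg_left this (inv_pos.mpr hMpos).le
          _ = 1 := inv_mul_cancel₀ hMpos.ne'
      have h2 : c / (2 * B) < ‖M⁻¹ • y m‖ := by
        rw [norm_smul, Real.norm_eq_abs, abs_of_pos (inv_pos.mpr hMpos)]
        have hMB : M ≤ B := by
          rw [hM]
          nth_rewrite 2 [← one_mul B]
          exact mul_le_mul_of_nonneg_right (pow_le_one₀ (by linarith) (by linarith)) hB.le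
        have : c / (2 * B) < c / M := by
          apply div_lt_div_of_pos_left hc hMpos
          linarith
        calc c / (2 * B) < c / M := this
          _ = M⁻¹ * c := by ring
          _ ≤ M⁻¹ * ‖y m‖ := mul_le_mul_of_nonneg_left (hy m) (inv_pos.mpr hMpos).le
      have h3 := hδ _ _ h1 h2
      rw [norm_smul, Real.norm_eq_abs, abs_of_pos (inv_pos.mpr hMpos)] at h3
      have h4 : M⁻¹ * ‖∑ i ∈ Finset.range m, w i • y i‖ < 1 - δ := by
        calc M⁻¹ * ‖∑ i ∈ Finset.range m, w i • y i‖ < 1 - δ₀ := h3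
          _ ≤ 1 - δ := by have : δ ≤ δ₀ := min_le_left _ _; linarith
      calc ‖∑ i ∈ Finset.range m, w i • y i‖
          = M * (M⁻¹ * ‖∑ i ∈ Finset.range m, w i • y i‖) := by field_simp
        _ ≤ M * (1 - δ) := mul_le_mul_of_nonneg_left h4.le hMpos.le
        _ = (1 - δ)^(K+1) * B := by rw [hM]; ring
  have hy0 : ∀ K : ℕ, c ≤ (1 - δ)^K * B := by
    intro K
    refine le_trans (hy 0) ?_
    have := key K 1 (fun _ => 1) (fun _ => by simp)
    simpa using this
  obtain ⟨K, hK⟩ := exists_pow_lt_of_lt_one (div_pos hc hB) (show (1-δ) < 1 by linarith)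
  have := hy0 K
  rw [lt_div_iff₀ hB] at hK
  linarith

lemma compact_of_fd_range {X Y : Type*} [NormedAddCommGroup X] [NormedSpace ℂ X]
    [NormedAddCommGroup Y] [NormedSpace ℂ Y]
    (T : X →L[ℂ] Y) (hT : FiniteDimensional ℂ (LinearMap.range (T : X →ₗ[ℂ] Y))) :
    IsCompactOperator T := by
  rw [isCompactOperator_iff_exists_mem_nhds_image_subset_compact]
  refine ⟨Metric.closedBall 0 1, Metric.closedBall_mem_nhds 0 one_pos,
    Subtype.val '' Metric.closedBall (0 : LinearMap.range (T : X →ₗ[ℂ] Y)) ‖T‖, ?_, ?_⟩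
  · have : ProperSpace (LinearMap.range (T : X →ₗ[ℂ] Y)) := FiniteDimensional.proper ℂ _
    exact (isCompact_closedBall _ _).image continuous_subtype_val
  · rintro y ⟨x, hx, rfl⟩
    refine ⟨⟨T x, LinearMap.mem_range_self _ x⟩, ?_, rfl⟩
    simp only [Metric.mem_closedBall, dist_zero_right]
    calc ‖(⟨T x, _⟩ : LinearMap.range (T : X →ₗ[ℂ] Y))‖ = ‖T x‖ := rfl
      _ ≤ ‖T‖ * ‖x‖ := T.le_opNorm x
      _ ≤ ‖T‖ * 1 := by
          apply mul_le_mul_of_nonneg_left _ (norm_nonneg T)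
          simpa [dist_zero_right] using hx
      _ = ‖T‖ := mul_one _

end

end StmtAux

theorem stmt_7 {Y : Type*} [NormedAddCommGroup Y] [NormedSpace ℂ Y] [CompleteSpace Y]
    (h : CUniformConvex Y) :
    (¬ ∃ T : ZeroAtInftyContinuousMap ℕ ℂ →L[ℂ] Y, ∃ c > (0:ℝ),
        ∀ f : ZeroAtInftyContinuousMap ℕ ℂ, c * ‖f‖ ≤ ‖T f‖) ∧
      ∀ T : ZeroAtInftyContinuousMap ℕ ℂ →L[ℂ] Y, IsCompactOperator T := by
  classical
  constructor
  · -- no isomorphic copy of c₀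
    rintro ⟨T, c, hc, hT⟩
    have hd : ∀ i j, i ≠ j → ∀ k, StmtAux.ee i k = 0 ∨ StmtAux.ee j k = 0 := by
      intro i j hij k
      rcases eq_or_ne k i with rfl | hki
      · right; rw [StmtAux.ee_apply, if_neg hij]
      · left; rw [StmtAux.ee_apply, if_neg hki]
    exact StmtAux.core h (‖T‖ + 1) c (by positivity) hc (fun i => T (StmtAux.ee i))
      (fun i => by
        have := hT (StmtAux.ee i)
        rwa [StmtAux.norm_ee, mul_one] at this)
      (StmtAux.hbd_of T StmtAux.ee (fun i => (StmtAux.norm_ee i).le) hd)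
  · intro T
    by_cases H : ∀ ε > (0:ℝ), ∃ n : ℕ, ∀ f : StmtAux.c0, ‖f‖ ≤ 1 → (∀ k ≤ n, f k = 0) →
        ‖T f‖ < ε
    · -- T is a limit of finite rank operators, hence compact
      have hcomp : ∀ n : ℕ, IsCompactOperator (T.comp (StmtAux.truncL n)) := by
        intro n
        apply StmtAux.compact_of_fd_range
        haveI : FiniteDimensional ℂ
            (Submodule.span ℂ (Set.range (fun i : Fin n => T (StmtAux.ee i)))) :=
          FiniteDimensional.span_of_finite ℂ (Set.finite_range _)
        apply Submodule.finiteDimensional_of_le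
          (S₂ := Submodule.span ℂ (Set.range (fun i : Fin n => T (StmtAux.ee i))))
        rintro y ⟨f, rfl⟩
        show T (StmtAux.truncL n f) ∈ _
        rw [StmtAux.truncL_eq_sum, map_sum]
        apply Submodule.sum_mem
        intro i hi
        rw [T.map_smul]
        exact Submodule.smul_mem _ _ (Submodule.subset_span
          ⟨⟨i, Finset.mem_range.mp hi⟩, rfl⟩)
      apply isCompactOperator_of_tendsto
        (l := atTop) (F := fun n => T.comp (StmtAux.truncL n)) ?_ (Eventually.of_forall hcomp)
      rw [Metric.tendsto_atTop]
      intro ε hε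
      obtain ⟨n₀, hn₀⟩ := H (ε/2) (by linarith)
      refine ⟨n₀ + 1, fun n hn => ?_⟩
      rw [dist_eq_norm]
      have hop : ‖T.comp (StmtAux.truncL n) - T‖ ≤ ε/2 := by
        apply ContinuousLinearMap.opNorm_le_bound _ (by linarith)
        intro f
        have hg : (T.comp (StmtAux.truncL n) - T) f = T (StmtAux.truncL n f - f) := by
          simp [map_sub]
        rw [hg]
        set g : StmtAux.c0 := StmtAux.truncL n f - f with hgdef
        have hgk : ∀ k, g k = if k < n then 0 else -f k := by
          intro k
          simp only [hgdef, ZeroAtInftyContinuousMap.sub_apply, StmtAux.truncL_apply]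
          split <;> simp
        have hgnorm : ‖g‖ ≤ ‖f‖ := by
          apply StmtAux.c0_norm_le _ (norm_nonneg f)
          intro k
          rw [hgk k]
          split
          · simp [norm_nonneg f]
          · simpa using StmtAux.c0_apply_le_norm f k
        rcases eq_or_ne f 0 with rfl | hf0
        · simp [hgdef]
        · have hfpos : 0 < ‖f‖ := norm_pos_iff.mpr hf0
          have hrn : ‖((‖f‖ : ℂ))⁻¹‖ = ‖f‖⁻¹ := by
            rw [norm_inv, Complex.norm_real, norm_norm]
          have key := hn₀ (((‖f‖ : ℂ))⁻¹ • g)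
            (by
              rw [StmtAux.c0_norm_smul, hrn]
              calc ‖f‖⁻¹ * ‖g‖ ≤ ‖f‖⁻¹ * ‖f‖ :=
                    mul_le_mul_of_nonneg_left hgnorm (inv_pos.mpr hfpos).le
                _ = 1 := inv_mul_cancel₀ hfpos.ne')
            (by
              intro k hk
              rw [ZeroAtInftyContinuousMap.smul_apply, hgk k, if_pos (by omega)]
              simp)
          rw [map_smul, norm_smul, hrn] at key
          calc ‖T g‖ = ‖f‖ * (‖f‖⁻¹ * ‖T g‖) := by field_simp
            _ ≤ ‖f‖ * (ε/2) := mul_le_mul_of_nonneg_left key.le hfpos.le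
            _ = ε/2 * ‖f‖ := by ring
      calc ‖T.comp (StmtAux.truncL n) - T‖ ≤ ε/2 := hop
        _ < ε := by linarith
    · -- otherwise: a disjointly supported separated sequence, contradiction
      exfalso
      push_neg at H
      obtain ⟨ε, hε, H⟩ := H
      have hTpos : (0:ℝ) < ‖T‖ + 1 := by positivity
      set s : ℝ := ε / (2 * (‖T‖ + 1)) with hs
      have hspos : 0 < s := by positivity
      have step : ∀ n : ℕ, ∃ p : ℕ × StmtAux.c0, n < p.1 ∧ ‖p.2‖ ≤ 1 ∧
          (∀ k ≤ n, p.2 k = 0) ∧ (∀ k, p.1 ≤ k → p.2 k = 0) ∧ ε/2 ≤ ‖T p.2‖ := by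
        intro n
        obtain ⟨f, hf1, hf2, hf3⟩ := H n
        have hzero : Tendsto (fun k => f k) atTop (𝓝 0) := by
          have := zero_at_infty f
          rwa [cocompact_eq_atTop] at this
        have : ∀ᶠ k in atTop, ‖f k‖ ≤ s := by
          have hn := hzero.norm
          rw [norm_zero] at hn
          exact hn.eventually_le_const hspos
        obtain ⟨N₀, hN₀⟩ := this.exists_forall_of_atTop
        set N : ℕ := max N₀ (n + 1) with hN
        refine ⟨⟨N, StmtAux.truncL N f⟩, by omega, le_trans (StmtAux.norm_truncL_le N f) hf1,
          ?_, ?_, ?_⟩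
        · intro k hk
          simp only [StmtAux.truncL_apply]
          split
          · exact hf2 k hk
          · rfl
        · intro k hk
          simp only [StmtAux.truncL_apply]
          exact if_neg (by omega)
        · have hdiff : ‖f - StmtAux.truncL N f‖ ≤ s := by
            apply StmtAux.c0_norm_le _ hspos.le
            intro k
            simp only [ZeroAtInftyContinuousMap.sub_apply, StmtAux.truncL_apply]
            split
            · simp [hspos.le]
            · simpa using hN₀ k (by omega)
          have h1 : ‖T f - T (StmtAux.truncL N f)‖ ≤ (‖T‖ + 1) * s := by
            rw [← map_sub]
            calc ‖T (f - StmtAux.truncL N f)‖ ≤ ‖T‖ * ‖f - StmtAux.truncL N f‖ := T.le_opNorm _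
              _ ≤ (‖T‖ + 1) * s := by
                  apply mul_le_mul (by linarith) hdiff (norm_nonneg _) (by linarith)
          have h2 : (‖T‖ + 1) * s = ε / 2 := by
            rw [hs]; field_simp
          have h3 : ‖T f‖ ≤ ‖T (StmtAux.truncL N f)‖ + ‖T f - T (StmtAux.truncL N f)‖ := by
            have := norm_add_le (T (StmtAux.truncL N f)) (T f - T (StmtAux.truncL N f))
            simpa using this
          have hTf : ε ≤ ‖T f‖ := hf3
          linarith
      choose P hP1 hP2 hP3 hP4 hP5 using step
      let rec' : ℕ → ℕ := fun k => Nat.rec 0 (fun _ n => (P n).1) k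
      have hrec : ∀ k, rec' (k + 1) = (P (rec' k)).1 := fun k => rfl
      have hmono : StrictMono rec' := strictMono_nat_of_lt_succ (fun k => by
        rw [hrec]; exact hP1 (rec' k))
      set F : ℕ → StmtAux.c0 := fun k => (P (rec' k)).2 with hF
      have hd : ∀ i j, i ≠ j → ∀ k, F i k = 0 ∨ F j k = 0 := by
        have main : ∀ i j, i < j → ∀ k, F i k = 0 ∨ F j k = 0 := by
          intro i j hij k
          by_cases hk : k < rec' (i + 1)
          · right
            apply hP3 (rec' j) k
            have hle : rec' (i + 1) ≤ rec' j := hmono.monotone (show i + 1 ≤ j by omega)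
            omega
          · left
            exact hP4 (rec' i) k (by rw [← hrec]; omega)
        intro i j hij k
        rcases lt_or_gt_of_ne hij with hlt | hlt
        · exact main i j hlt k
        · exact (main j i hlt k).symm
      exact StmtAux.core h (‖T‖ + 1) (ε/2) hTpos (by linarith)
        (fun k => T (F k)) (fun k => hP5 (rec' k))
        (StmtAux.hbd_of T F (fun k => hP2 (rec' k)) hd)
end

section
/- Let X be a Banach space such that X = X₁ ⊕₁ X₂ is an ℓ₁-direct sum of two non-trivial subspaces, and let Y be a Banach space. If the pair (X, Y) has the Bishop–Phelps–Bollobás property for range strongly exposing operators (BPBp-RSE), then Y is uniformly convex. -/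
open Filter Topology

instance : Fact ((1:ENNReal) ≤ 1) := ⟨le_rfl⟩

open RCLike in
lemma aux_unimodular {𝕜 : Type*} [RCLike 𝕜] {α β : ℝ} {l₀ l₁ l₂ : 𝕜} (hα : 0 < α) (hβ : 0 < β)
    (hαβ : α + β = 1) (h₀ : ‖l₀‖ = 1) (h₁ : ‖l₁‖ = 1) (h₂ : ‖l₂‖ = 1)
    (heq : l₀ = (α:𝕜) * l₁ + (β:𝕜) * l₂) : l₁ = l₂ := by
  set w : 𝕜 := (starRingEnd 𝕜) l₁ * l₂ with hw_def
  have hw : ‖w‖ = 1 := by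
    rw [hw_def, norm_mul, RCLike.norm_conj, h₁, h₂, one_mul]
  have e1 : (starRingEnd 𝕜) l₁ * l₁ = (1:𝕜) := by
    rw [RCLike.conj_mul, h₁]; norm_num
  have hkey : ‖(α:𝕜) + (β:𝕜) * w‖ = 1 := by
    have hc : (starRingEnd 𝕜) l₁ * l₀ = (α:𝕜) + (β:𝕜) * w := by
      rw [heq, hw_def, mul_add, mul_left_comm, e1, mul_one, mul_left_comm]
    calc ‖(α:𝕜) + (β:𝕜) * w‖ = ‖(starRingEnd 𝕜) l₁ * l₀‖ := by rw [hc]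
      _ = 1 := by rw [norm_mul, RCLike.norm_conj, h₁, h₀, one_mul]
  have hri : re w ^ 2 + im w ^ 2 = 1 := by
    have := (RCLike.norm_sq_eq_def (z := w))
    rw [hw] at this; nlinarith [this]
  have h2 : (α + β * re w) ^ 2 + (β * im w) ^ 2 = 1 := by
    have := (RCLike.norm_sq_eq_def (z := (α:𝕜) + (β:𝕜) * w))
    rw [hkey] at this
    simp only [map_add, RCLike.ofReal_re, RCLike.ofReal_im, RCLike.mul_re, RCLike.mul_im,
      zero_mul, mul_zero, sub_zero, zero_add, add_zero] at this
    nlinarith [this]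
  have h3 : (2*α*β) * re w = (2*α*β) * 1 := by
    linear_combination h2 - β^2*hri - (α+β+1)*hαβ
  have hre : re w = 1 := mul_left_cancel₀ (by positivity) h3
  have him : im w = 0 := by
    have h4 : im w ^ 2 = 0 := by nlinarith [hri]
    exact pow_eq_zero_iff (by norm_num) |>.mp h4
  have hw1 : w = 1 := by
    apply RCLike.ext <;> simp [hre, him]
  have h5 : l₁ * w = l₁ := by rw [hw1, mul_one]
  rw [hw_def, ← mul_assoc, RCLike.mul_conj, h₁] at h5
  simpa using h5.symm

section Helpers
variable {𝕜 X₁ X₂ Y : Type*} [RCLike 𝕜]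
    [NormedAddCommGroup X₁] [NormedSpace 𝕜 X₁]
    [NormedAddCommGroup X₂] [NormedSpace 𝕜 X₂]
    [NormedAddCommGroup Y] [NormedSpace 𝕜 Y]

lemma withLp1_norm (x : WithLp 1 (X₁ × X₂)) : ‖x‖ = ‖x.fst‖ + ‖x.snd‖ := by
  rw [WithLp.prod_norm_eq_add (by norm_num)]
  norm_num

lemma rse_const {X : Type*} [NormedAddCommGroup X] [NormedSpace 𝕜 X]
    {S : X →L[𝕜] Y} {w₀ : X}
    (h : RSEAt 𝕜 S w₀) {u : X} (hu : ‖u‖ ≤ 1) (hSu : ‖S u‖ = ‖S‖) :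
    ∃ l : 𝕜, ‖l‖ = 1 ∧ S u = l • S w₀ := by
  obtain ⟨-, -, h3⟩ := h
  obtain ⟨σ, l, -, hl, ht⟩ := h3 (fun _ => u) (fun _ => hu)
    (by rw [show (fun n : ℕ => ‖S ((fun _ : ℕ => u) n)‖) = fun _ => ‖S u‖ from rfl, hSu]
        exact tendsto_const_nhds)
  exact ⟨l, hl, tendsto_nhds_unique tendsto_const_nhds ht⟩

end Helpers

set_option maxHeartbeats 2000000 in
theorem stmt_8 {𝕜 X₁ X₂ Y : Type*} [RCLike 𝕜]
    [NormedAddCommGroup X₁] [NormedSpace 𝕜 X₁] [CompleteSpace X₁] [Nontrivial X₁]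
    [NormedAddCommGroup X₂] [NormedSpace 𝕜 X₂] [CompleteSpace X₂] [Nontrivial X₂]
    [NormedAddCommGroup Y] [NormedSpace 𝕜 Y] [CompleteSpace Y]
    (h : BPBpRSE 𝕜 (WithLp 1 (X₁ × X₂)) Y) : UniformConvexSpace Y := by
  by_contra hY
  have H : ∃ ε₀ > (0:ℝ), ∀ δ > (0:ℝ), ∃ y z : Y, ‖y‖ = 1 ∧ ‖z‖ = 1 ∧ ε₀ ≤ ‖y - z‖ ∧
      2 - δ < ‖y + z‖ := by
    by_contra hH
    push_neg at hH
    refine hY ⟨fun ε hε => ?_⟩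
    obtain ⟨δ, hδ, hh⟩ := hH ε hε
    exact ⟨δ, hδ, fun y hy z hz hyz => hh y z hy hz hyz⟩
  obtain ⟨ε₀, hε₀, Hne⟩ := H
  set ε : ℝ := min (1/4) (ε₀/19) with hε_def
  have hε : 0 < ε := lt_min (by norm_num) (by positivity)
  have hε4 : ε ≤ 1/4 := min_le_left _ _
  have hε19 : ε ≤ ε₀/19 := min_le_right _ _
  obtain ⟨η, hη0, hηε, hmain⟩ := h ε hε
  obtain ⟨y, z, hy, hz, hyz, hsum⟩ := Hne (2*η) (by positivity)
  -- unit vectors and dual functionals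
  obtain ⟨x₁, hx₁⟩ : ∃ x : X₁, ‖x‖ = 1 := by
    obtain ⟨v, hv⟩ := exists_ne (0 : X₁)
    refine ⟨((‖v‖ : 𝕜))⁻¹ • v, ?_⟩
    rw [norm_smul, norm_inv, RCLike.norm_ofReal, abs_norm]
    exact inv_mul_cancel₀ (norm_ne_zero_iff.mpr hv)
  obtain ⟨x₂, hx₂⟩ : ∃ x : X₂, ‖x‖ = 1 := by
    obtain ⟨v, hv⟩ := exists_ne (0 : X₂)
    refine ⟨((‖v‖ : 𝕜))⁻¹ • v, ?_⟩
    rw [norm_smul, norm_inv, RCLike.norm_ofReal, abs_norm]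
    exact inv_mul_cancel₀ (norm_ne_zero_iff.mpr hv)
  have hx₁0 : x₁ ≠ 0 := by
    intro hc; rw [hc, norm_zero] at hx₁; norm_num at hx₁
  have hx₂0 : x₂ ≠ 0 := by
    intro hc; rw [hc, norm_zero] at hx₂; norm_num at hx₂
  obtain ⟨f₁, hf₁, hf₁x⟩ := exists_dual_vector 𝕜 x₁ (norm_ne_zero_iff.mpr hx₁0)
  obtain ⟨f₂, hf₂, hf₂x⟩ := exists_dual_vector 𝕜 x₂ (norm_ne_zero_iff.mpr hx₂0)
  rw [hx₁] at hf₁x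
  rw [hx₂] at hf₂x
  push_cast at hf₁x hf₂x
  -- the operator T
  set T : WithLp 1 (X₁ × X₂) →L[𝕜] Y :=
    ((f₁.comp (ContinuousLinearMap.fst 𝕜 X₁ X₂)).smulRight y +
      (f₂.comp (ContinuousLinearMap.snd 𝕜 X₁ X₂)).smulRight z).comp
      (WithLp.prodContinuousLinearEquiv 1 𝕜 X₁ X₂ :
        WithLp 1 (X₁ × X₂) ≃L[𝕜] X₁ × X₂).toContinuousLinearMap with hT_def
  have hTapp : ∀ v : WithLp 1 (X₁ × X₂), T v = f₁ v.fst • y + f₂ v.snd • z := fun _ => rfl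
  have hTle : ‖T‖ ≤ 1 := by
    refine ContinuousLinearMap.opNorm_le_bound T zero_le_one (fun v => ?_)
    rw [hTapp, one_mul, withLp1_norm]
    calc ‖f₁ v.fst • y + f₂ v.snd • z‖ ≤ ‖f₁ v.fst • y‖ + ‖f₂ v.snd • z‖ := norm_add_le _ _
      _ = ‖f₁ v.fst‖ + ‖f₂ v.snd‖ := by rw [norm_smul, norm_smul, hy, hz, mul_one, mul_one]
      _ ≤ ‖f₁‖ * ‖v.fst‖ + ‖f₂‖ * ‖v.snd‖ := add_le_add (f₁.le_opNorm _) (f₂.le_opNorm _)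
      _ = ‖v.fst‖ + ‖v.snd‖ := by rw [hf₁, hf₂, one_mul, one_mul]
  have hT : ‖T‖ = 1 := by
    refine le_antisymm hTle ?_
    have he₁ : ‖(WithLp.equiv 1 (X₁ × X₂)).symm (x₁, 0)‖ = 1 := by
      rw [withLp1_norm]; simp [hx₁]
    have hTe₁ : T ((WithLp.equiv 1 (X₁ × X₂)).symm (x₁, 0)) = y := by
      rw [hTapp]
      show f₁ x₁ • y + f₂ 0 • z = y
      rw [hf₁x, map_zero, one_smul, zero_smul, add_zero]
    calc (1:ℝ) = ‖T ((WithLp.equiv 1 (X₁ × X₂)).symm (x₁, 0))‖ := by rw [hTe₁, hy]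
      _ ≤ ‖T‖ * 1 := by rw [← he₁]; exact T.le_opNorm _
      _ = ‖T‖ := mul_one _
  -- the point
  have h2k : ‖((2:𝕜))⁻¹‖ = (2:ℝ)⁻¹ := by
    rw [norm_inv]; norm_num
  set pt : WithLp 1 (X₁ × X₂) :=
    (WithLp.equiv 1 (X₁ × X₂)).symm ((2:𝕜)⁻¹ • x₁, (2:𝕜)⁻¹ • x₂) with hpt_def
  have hpt : ‖pt‖ = 1 := by
    rw [withLp1_norm]
    show ‖(2:𝕜)⁻¹ • x₁‖ + ‖(2:𝕜)⁻¹ • x₂‖ = 1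
    rw [norm_smul, norm_smul, h2k, hx₁, hx₂]; norm_num
  have hTpt : 1 - η < ‖T pt‖ := by
    have : T pt = (2:𝕜)⁻¹ • (y + z) := by
      rw [hTapp]
      show f₁ ((2:𝕜)⁻¹ • x₁) • y + f₂ ((2:𝕜)⁻¹ • x₂) • z = (2:𝕜)⁻¹ • (y + z)
      rw [map_smul, map_smul, hf₁x, hf₂x, smul_add]
      simp [smul_smul]
    rw [this, norm_smul, h2k]
    linarith [hsum]
  obtain ⟨S, x₀, hRSE, hx₀, hS, hSx₀, hST, hppt⟩ := hmain T hT pt hpt hTpt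
  obtain ⟨w₀, hw₀⟩ := hRSE
  have hSw₀ : ‖S w₀‖ = 1 := by rw [hw₀.2.1, hS]
  have hSw₀0 : S w₀ ≠ 0 := by
    intro hc; rw [hc, norm_zero] at hSw₀; norm_num at hSw₀
  -- components of x₀
  set a : X₁ := x₀.fst with ha_def
  set b : X₂ := x₀.snd with hb_def
  have hab : ‖a‖ + ‖b‖ = 1 := by rw [← withLp1_norm x₀, hx₀]
  have hda : ‖(2:𝕜)⁻¹ • x₁ - a‖ < ε ∧ ‖(2:𝕜)⁻¹ • x₂ - b‖ < ε := by
    have h1 : ‖pt - x₀‖ = ‖(2:𝕜)⁻¹ • x₁ - a‖ + ‖(2:𝕜)⁻¹ • x₂ - b‖ := by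
      rw [withLp1_norm (pt - x₀)]; rfl
    constructor
    · nlinarith [norm_nonneg ((2:𝕜)⁻¹ • x₂ - b), hppt, h1.symm.trans_lt hppt]
    · nlinarith [norm_nonneg ((2:𝕜)⁻¹ • x₁ - a), h1.symm.trans_lt hppt]
  have hna : |‖a‖ - 1/2| ≤ ε := by
    have h1 := abs_norm_sub_norm_le a ((2:𝕜)⁻¹ • x₁)
    rw [norm_smul, h2k, hx₁, mul_one, norm_sub_rev] at h1
    calc |‖a‖ - 1/2| = |‖a‖ - (2:ℝ)⁻¹| := by norm_num
      _ ≤ ‖(2:𝕜)⁻¹ • x₁ - a‖ := h1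
      _ ≤ ε := le_of_lt hda.1
  have hnb : |‖b‖ - 1/2| ≤ ε := by
    have h1 := abs_norm_sub_norm_le b ((2:𝕜)⁻¹ • x₂)
    rw [norm_smul, h2k, hx₂, mul_one, norm_sub_rev] at h1
    calc |‖b‖ - 1/2| = |‖b‖ - (2:ℝ)⁻¹| := by norm_num
      _ ≤ ‖(2:𝕜)⁻¹ • x₂ - b‖ := h1
      _ ≤ ε := le_of_lt hda.2
  have hapos : (1:ℝ)/4 ≤ ‖a‖ := by
    have := abs_le.mp hna; linarith
  have hbpos : (1:ℝ)/4 ≤ ‖b‖ := by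
    have := abs_le.mp hnb; linarith
  have ha0 : (0:ℝ) < ‖a‖ := by linarith
  have hb0 : (0:ℝ) < ‖b‖ := by linarith
  -- the pieces
  set v₁ : WithLp 1 (X₁ × X₂) := (WithLp.equiv 1 (X₁ × X₂)).symm (a, 0) with hv₁_def
  set v₂ : WithLp 1 (X₁ × X₂) := (WithLp.equiv 1 (X₁ × X₂)).symm (0, b) with hv₂_def
  have hv₁n : ‖v₁‖ = ‖a‖ := by rw [withLp1_norm]; show ‖a‖ + ‖(0:X₂)‖ = ‖a‖; simp
  have hv₂n : ‖v₂‖ = ‖b‖ := by rw [withLp1_norm]; show ‖(0:X₁)‖ + ‖b‖ = ‖b‖; simp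
  have hvsum : v₁ + v₂ = x₀ := by
    apply (WithLp.equiv 1 (X₁ × X₂)).injective
    show ((a, 0) : X₁ × X₂) + (0, b) = (x₀.fst, x₀.snd)
    exact Prod.ext (by simp [ha_def]) (by simp [hb_def])
  have hSv₁le : ‖S v₁‖ ≤ ‖a‖ := by
    calc ‖S v₁‖ ≤ ‖S‖ * ‖v₁‖ := S.le_opNorm _
      _ = ‖a‖ := by rw [hS, hv₁n, one_mul]
  have hSv₂le : ‖S v₂‖ ≤ ‖b‖ := by
    calc ‖S v₂‖ ≤ ‖S‖ * ‖v₂‖ := S.le_opNorm _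
      _ = ‖b‖ := by rw [hS, hv₂n, one_mul]
  have htot : (1:ℝ) ≤ ‖S v₁‖ + ‖S v₂‖ := by
    calc (1:ℝ) = ‖S x₀‖ := hSx₀.symm
      _ = ‖S v₁ + S v₂‖ := by rw [← map_add, hvsum]
      _ ≤ ‖S v₁‖ + ‖S v₂‖ := norm_add_le _ _
  have hSv₁ : ‖S v₁‖ = ‖a‖ := by linarith
  have hSv₂ : ‖S v₂‖ = ‖b‖ := by linarith
  -- normalized points
  set u₁ : WithLp 1 (X₁ × X₂) := ((‖a‖:𝕜))⁻¹ • v₁ with hu₁_def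
  set u₂ : WithLp 1 (X₁ × X₂) := ((‖b‖:𝕜))⁻¹ • v₂ with hu₂_def
  have hka : ‖((‖a‖:𝕜))⁻¹‖ = ‖a‖⁻¹ := by
    rw [norm_inv, RCLike.norm_ofReal, abs_norm]
  have hkb : ‖((‖b‖:𝕜))⁻¹‖ = ‖b‖⁻¹ := by
    rw [norm_inv, RCLike.norm_ofReal, abs_norm]
  have hu₁n : ‖u₁‖ = 1 := by
    rw [hu₁_def, norm_smul, hka, hv₁n, inv_mul_cancel₀ (ne_of_gt ha0)]
  have hu₂n : ‖u₂‖ = 1 := by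
    rw [hu₂_def, norm_smul, hkb, hv₂n, inv_mul_cancel₀ (ne_of_gt hb0)]
  have hSu₁ : ‖S u₁‖ = 1 := by
    rw [hu₁_def, map_smul, norm_smul, hka, hSv₁, inv_mul_cancel₀ (ne_of_gt ha0)]
  have hSu₂ : ‖S u₂‖ = 1 := by
    rw [hu₂_def, map_smul, norm_smul, hkb, hSv₂, inv_mul_cancel₀ (ne_of_gt hb0)]
  -- apply the RSE property
  obtain ⟨l₁, hl₁n, hl₁⟩ := rse_const hw₀ (le_of_eq hu₁n) (by rw [hSu₁, hS])
  obtain ⟨l₂, hl₂n, hl₂⟩ := rse_const hw₀ (le_of_eq hu₂n) (by rw [hSu₂, hS])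
  obtain ⟨l₀, hl₀n, hl₀⟩ := rse_const hw₀ (le_of_eq hx₀) (by rw [hSx₀, hS])
  have hvu₁ : S v₁ = ((‖a‖:𝕜)) • S u₁ := by
    rw [hu₁_def, map_smul, smul_inv_smul₀]
    exact_mod_cast fun hc => (ne_of_gt ha0) (by exact_mod_cast hc)
  have hvu₂ : S v₂ = ((‖b‖:𝕜)) • S u₂ := by
    rw [hu₂_def, map_smul, smul_inv_smul₀]
    exact_mod_cast fun hc => (ne_of_gt hb0) (by exact_mod_cast hc)
  have hcomb : l₀ = (‖a‖:𝕜) * l₁ + (‖b‖:𝕜) * l₂ := by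
    have h1 : l₀ • S w₀ = ((‖a‖:𝕜) * l₁ + (‖b‖:𝕜) * l₂) • S w₀ := by
      calc l₀ • S w₀ = S x₀ := hl₀.symm
        _ = S v₁ + S v₂ := by rw [← map_add, hvsum]
        _ = (‖a‖:𝕜) • (l₁ • S w₀) + (‖b‖:𝕜) • (l₂ • S w₀) := by rw [hvu₁, hvu₂, hl₁, hl₂]
        _ = ((‖a‖:𝕜) * l₁ + (‖b‖:𝕜) * l₂) • S w₀ := by
            rw [smul_smul, smul_smul, add_smul]
    have h2 : (l₀ - ((‖a‖:𝕜) * l₁ + (‖b‖:𝕜) * l₂)) • S w₀ = 0 := by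
      rw [sub_smul, h1, sub_self]
    rcases smul_eq_zero.mp h2 with hc | hc
    · exact sub_eq_zero.mp hc
    · exact absurd hc hSw₀0
  have hll : l₁ = l₂ := aux_unimodular ha0 hb0 hab hl₀n hl₁n hl₂n hcomb
  have hSuu : S u₁ = S u₂ := by rw [hl₁, hl₂, hll]
  -- estimates
  have hfa : ‖f₁ a - (2:𝕜)⁻¹‖ ≤ ε := by
    have h1 : f₁ ((2:𝕜)⁻¹ • x₁ - a) = (2:𝕜)⁻¹ - f₁ a := by
      rw [map_sub, map_smul, hf₁x, smul_eq_mul, mul_one]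
    calc ‖f₁ a - (2:𝕜)⁻¹‖ = ‖f₁ ((2:𝕜)⁻¹ • x₁ - a)‖ := by rw [h1, norm_sub_rev]
      _ ≤ ‖f₁‖ * ‖(2:𝕜)⁻¹ • x₁ - a‖ := f₁.le_opNorm _
      _ ≤ 1 * ε := by
          rw [hf₁, one_mul, one_mul]
          exact le_of_lt hda.1
      _ = ε := one_mul ε
  have hfb : ‖f₂ b - (2:𝕜)⁻¹‖ ≤ ε := by
    have h1 : f₂ ((2:𝕜)⁻¹ • x₂ - b) = (2:𝕜)⁻¹ - f₂ b := by
      rw [map_sub, map_smul, hf₂x, smul_eq_mul, mul_one]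
    calc ‖f₂ b - (2:𝕜)⁻¹‖ = ‖f₂ ((2:𝕜)⁻¹ • x₂ - b)‖ := by rw [h1, norm_sub_rev]
      _ ≤ ‖f₂‖ * ‖(2:𝕜)⁻¹ • x₂ - b‖ := f₂.le_opNorm _
      _ ≤ 1 * ε := by rw [hf₂, one_mul, one_mul]; exact le_of_lt hda.2
      _ = ε := one_mul ε
  -- T applied to u₁, u₂
  have hTu₁ : T u₁ = (((‖a‖:𝕜))⁻¹ * f₁ a) • y := by
    rw [hTapp]
    show f₁ (((‖a‖:𝕜))⁻¹ • a) • y + f₂ (((‖a‖:𝕜))⁻¹ • (0:X₂)) • z = _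
    rw [smul_zero, map_zero, zero_smul, add_zero, map_smul, smul_eq_mul]
  have hTu₂ : T u₂ = (((‖b‖:𝕜))⁻¹ * f₂ b) • z := by
    rw [hTapp]
    show f₁ (((‖b‖:𝕜))⁻¹ • (0:X₁)) • y + f₂ (((‖b‖:𝕜))⁻¹ • b) • z = _
    rw [smul_zero, map_zero, zero_smul, zero_add, map_smul, smul_eq_mul]
  have hεbound : ∀ (c : ℝ) (fc : 𝕜) (w : Y), ‖w‖ = 1 → |c - 1/2| ≤ ε → 1/4 ≤ c →
      ‖fc - (2:𝕜)⁻¹‖ ≤ ε → ‖w - ((c:𝕜))⁻¹ • (fc • w)‖ ≤ 8 * ε := by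
    intro c fc w hw hc hc4 hfc
    have hc0 : (0:ℝ) < c := by linarith
    have hcc : ((c:𝕜)) ≠ 0 := by
      exact_mod_cast fun hcon => (ne_of_gt hc0) (by exact_mod_cast hcon)
    have h1 : w - ((c:𝕜))⁻¹ • (fc • w) = (((c:𝕜))⁻¹ * ((c:𝕜) - fc)) • w := by
      rw [mul_sub, sub_smul, inv_mul_cancel₀ hcc, one_smul, mul_smul]
    have h2 : ‖(c:𝕜) - fc‖ ≤ 2 * ε := by
      calc ‖(c:𝕜) - fc‖ ≤ ‖(c:𝕜) - (2:𝕜)⁻¹‖ + ‖(2:𝕜)⁻¹ - fc‖ := by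
            simpa using norm_sub_le_norm_sub_add_norm_sub (c:𝕜) ((2:𝕜)⁻¹) fc
        _ ≤ ε + ε := by
            refine add_le_add ?_ (by rwa [norm_sub_rev])
            have : ((c:𝕜)) - (2:𝕜)⁻¹ = ((c - 1/2 : ℝ) : 𝕜) := by push_cast; ring
            rw [this, RCLike.norm_ofReal]
            exact (abs_sub_comm c (1/2) ▸ hc)
        _ = 2 * ε := by ring
    rw [h1, norm_smul, norm_mul, norm_inv, RCLike.norm_ofReal, abs_of_pos hc0, hw, mul_one]
    calc c⁻¹ * ‖(c:𝕜) - fc‖ ≤ 4 * (2 * ε) := by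
          refine mul_le_mul ?_ h2 (norm_nonneg _) (by norm_num)
          rw [inv_le_comm₀ hc0 (by norm_num)]
          linarith
      _ = 8 * ε := by ring
  have hyu : ‖y - S u₁‖ ≤ 9 * ε := by
    have h1 : ‖y - T u₁‖ ≤ 8 * ε := by
      rw [hTu₁, mul_smul]
      exact hεbound ‖a‖ (f₁ a) y hy hna hapos hfa
    have h2 : ‖T u₁ - S u₁‖ ≤ ε := by
      calc ‖T u₁ - S u₁‖ = ‖(S - T) u₁‖ := by
            rw [ContinuousLinearMap.sub_apply, norm_sub_rev]
        _ ≤ ‖S - T‖ * ‖u₁‖ := (S - T).le_opNorm _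
        _ ≤ ε := by rw [hu₁n, mul_one]; exact le_of_lt hST
    calc ‖y - S u₁‖ ≤ ‖y - T u₁‖ + ‖T u₁ - S u₁‖ := norm_sub_le_norm_sub_add_norm_sub _ _ _
      _ ≤ 8 * ε + ε := add_le_add h1 h2
      _ = 9 * ε := by ring
  have hzu : ‖z - S u₂‖ ≤ 9 * ε := by
    have h1 : ‖z - T u₂‖ ≤ 8 * ε := by
      rw [hTu₂, mul_smul]
      exact hεbound ‖b‖ (f₂ b) z hz hnb hbpos hfb
    have h2 : ‖T u₂ - S u₂‖ ≤ ε := by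
      calc ‖T u₂ - S u₂‖ = ‖(S - T) u₂‖ := by
            rw [ContinuousLinearMap.sub_apply, norm_sub_rev]
        _ ≤ ‖S - T‖ * ‖u₂‖ := (S - T).le_opNorm _
        _ ≤ ε := by rw [hu₂n, mul_one]; exact le_of_lt hST
    calc ‖z - S u₂‖ ≤ ‖z - T u₂‖ + ‖T u₂ - S u₂‖ := norm_sub_le_norm_sub_add_norm_sub _ _ _
      _ ≤ 8 * ε + ε := add_le_add h1 h2
      _ = 9 * ε := by ring
  have hfinal : ‖y - z‖ ≤ 18 * ε := by
    calc ‖y - z‖ ≤ ‖y - S u₁‖ + ‖S u₁ - z‖ := norm_sub_le_norm_sub_add_norm_sub _ _ _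
      _ = ‖y - S u₁‖ + ‖z - S u₁‖ := by rw [norm_sub_rev (S u₁) z]
      _ = ‖y - S u₁‖ + ‖z - S u₂‖ := by rw [hSuu]
      _ ≤ 9 * ε + 9 * ε := add_le_add hyu hzu
      _ = 18 * ε := by ring
  linarith [hyz, hfinal, hε19, hε₀]
end

section
/- Let X and Y be real Banach spaces such that X = X₁ ⊕∞ X₂ is an ℓ∞-direct sum of two non-trivial subspaces. If the pair (X, Y) has the BPBp-RSE, then Y is uniformly convex. -/
open Filter Topology

instance : Fact ((1:ENNReal) ≤ ⊤) := ⟨le_top⟩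


section Aux

open Filter Topology

variable {X Y : Type*} [NormedAddCommGroup X] [NormedSpace ℝ X]
  [NormedAddCommGroup Y] [NormedSpace ℝ Y]

/-- Every exact norm attainer of an RSE operator maps to `± S w`. -/
lemma rse_rigid {S : X →L[ℝ] Y} {w : X} (hw : RSEAt ℝ S w)
    {x : X} (hx : ‖x‖ ≤ 1) (hSx : ‖S x‖ = ‖S‖) :
    ∃ l : ℝ, ‖l‖ = 1 ∧ S x = l • S w := by
  obtain ⟨-, -, h⟩ := hw
  obtain ⟨σ, l, -, hl, ht⟩ := h (fun _ => x) (fun _ => hx)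
    (hSx ▸ tendsto_const_nhds)
  exact ⟨l, hl, tendsto_nhds_unique (f := fun _ : ℕ => S x) tendsto_const_nhds ht⟩

lemma abs_add_add_abs_sub_le (a b : ℝ) : |a + b| + |a - b| ≤ 2 * max |a| |b| := by
  have h1 : a ≤ max |a| |b| := le_trans (le_abs_self a) (le_max_left _ _)
  have h2 : -a ≤ max |a| |b| := le_trans (neg_le_abs a) (le_max_left _ _)
  have h3 : b ≤ max |a| |b| := le_trans (le_abs_self b) (le_max_right _ _)
  have h4 : -b ≤ max |a| |b| := le_trans (neg_le_abs b) (le_max_right _ _)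
  rcases abs_cases (a + b) with ⟨e1, -⟩ | ⟨e1, -⟩ <;>
    rcases abs_cases (a - b) with ⟨e2, -⟩ | ⟨e2, -⟩ <;> linarith

end Aux

set_option maxHeartbeats 1000000 in
theorem stmt_9 {X₁ X₂ Y : Type*}
    [NormedAddCommGroup X₁] [NormedSpace ℝ X₁] [CompleteSpace X₁] [Nontrivial X₁]
    [NormedAddCommGroup X₂] [NormedSpace ℝ X₂] [CompleteSpace X₂] [Nontrivial X₂]
    [NormedAddCommGroup Y] [NormedSpace ℝ Y] [CompleteSpace Y]
    (h : BPBpRSE ℝ (WithLp ⊤ (X₁ × X₂)) Y) : UniformConvexSpace Y := by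
  constructor
  intro ε hε
  -- auxiliary scale
  set ε' : ℝ := min ε 1 / 4 with hε'def
  have hε'pos : 0 < ε' := by positivity
  have hε'le : ε' ≤ 1 / 4 := by
    have := min_le_right ε 1; simp only [hε'def]; linarith
  have hε'lt : ε' < ε / 2 := by
    have h1 : min ε 1 ≤ ε := min_le_left ε 1
    have : ε' ≤ ε / 4 := by simp only [hε'def]; linarith
    linarith
  obtain ⟨η, hη0, hηε', hmain⟩ := h ε' hε'pos
  refine ⟨η, hη0, ?_⟩
  intro y hy z hz hyz
  by_contra hcon
  push_neg at hcon
  -- unit vectors and norming functionals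
  obtain ⟨a', ha'⟩ := exists_ne (0 : X₁)
  obtain ⟨b', hb'⟩ := exists_ne (0 : X₂)
  set a : X₁ := ‖a'‖⁻¹ • a' with hadef
  set b : X₂ := ‖b'‖⁻¹ • b' with hbdef
  have ha : ‖a‖ = 1 := norm_smul_inv_norm ha'
  have hb : ‖b‖ = 1 := norm_smul_inv_norm hb'
  obtain ⟨f, hf1, hfa⟩ := exists_dual_vector ℝ a (by intro h0; rw [h0] at ha; linarith)
  obtain ⟨g, hg1, hgb⟩ := exists_dual_vector ℝ b (by intro h0; rw [h0] at hb; linarith)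
  rw [ha] at hfa
  rw [hb] at hgb
  have hfa' : f a = 1 := by simpa using hfa
  have hgb' : g b = 1 := by simpa using hgb
  set c₁ : Y := (2 : ℝ)⁻¹ • (y + z) with hc₁def
  set c₂ : Y := (2 : ℝ)⁻¹ • (y - z) with hc₂def
  set E := WithLp ⊤ (X₁ × X₂) with hEdef
  set J : X₁ × X₂ → E := fun v => (WithLp.equiv ⊤ (X₁ × X₂)).symm v with hJdef
  set T : E →L[ℝ] Y :=
    ((f.comp (ContinuousLinearMap.fst ℝ X₁ X₂)).smulRight c₁
      + (g.comp (ContinuousLinearMap.snd ℝ X₁ X₂)).smulRight c₂).comp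
      (WithLp.prodContinuousLinearEquiv ⊤ ℝ X₁ X₂).toContinuousLinearMap with hTdef
  have hTapp : ∀ x : E, T x = f x.fst • c₁ + g x.snd • c₂ := fun _ => rfl
  have hnormE : ∀ x : E, ‖x‖ = max ‖x.fst‖ ‖x.snd‖ := fun x => WithLp.prod_norm_eq_sup x
  -- decomposition of T x in terms of y and z
  have hcomb : ∀ α β : ℝ, α • c₁ + β • c₂ = ((α + β) / 2) • y + ((α - β) / 2) • z := by
    intro α β
    rw [hc₁def, hc₂def]
    rw [smul_smul, smul_smul, smul_add, smul_sub]
    module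
  -- ‖T x‖ ≤ ‖x‖
  have hTle : ∀ x : E, ‖T x‖ ≤ ‖x‖ := by
    intro x
    rw [hTapp, hcomb]
    have h1 : ‖((f x.fst + g x.snd) / 2) • y + ((f x.fst - g x.snd) / 2) • z‖
        ≤ |(f x.fst + g x.snd) / 2| * ‖y‖ + |(f x.fst - g x.snd) / 2| * ‖z‖ := by
      refine le_trans (norm_add_le _ _) ?_
      rw [norm_smul, norm_smul, Real.norm_eq_abs, Real.norm_eq_abs]
    rw [hy, hz] at h1
    have h2 : |(f x.fst + g x.snd) / 2| * 1 + |(f x.fst - g x.snd) / 2| * 1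
        ≤ max |f x.fst| |g x.snd| := by
      have h0 := abs_add_add_abs_sub_le (f x.fst) (g x.snd)
      have e1 : |(f x.fst + g x.snd) / 2| = |f x.fst + g x.snd| / 2 := by
        rw [abs_div, abs_two]
      have e2 : |(f x.fst - g x.snd) / 2| = |f x.fst - g x.snd| / 2 := by
        rw [abs_div, abs_two]
      rw [e1, e2]
      linarith
    have h3 : |f x.fst| ≤ ‖x.fst‖ := by
      have := f.le_opNorm x.fst
      rw [hf1, one_mul] at this
      simpa [Real.norm_eq_abs] using this
    have h4 : |g x.snd| ≤ ‖x.snd‖ := by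
      have := g.le_opNorm x.snd
      rw [hg1, one_mul] at this
      simpa [Real.norm_eq_abs] using this
    have h5 : max |f x.fst| |g x.snd| ≤ max ‖x.fst‖ ‖x.snd‖ := max_le_max h3 h4
    rw [hnormE]
    linarith
  -- T (a, b) = y and norm computations
  have hJfst : ∀ u : X₁, ∀ v : X₂, (J (u, v)).fst = u := fun _ _ => rfl
  have hJsnd : ∀ u : X₁, ∀ v : X₂, (J (u, v)).snd = v := fun _ _ => rfl
  have hTab : T (J (a, b)) = y := by
    rw [hTapp, hJfst, hJsnd, hfa', hgb', hcomb]
    norm_num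
  have hJab : ‖J (a, b)‖ = 1 := by
    rw [hnormE, hJfst, hJsnd, ha, hb, max_self]
  have hT1 : ‖T‖ = 1 := by
    refine le_antisymm (T.opNorm_le_bound zero_le_one (by intro x; rw [one_mul]; exact hTle x)) ?_
    have := T.le_opNorm (J (a, b))
    rw [hTab, hy, hJab, mul_one] at this
    exact this
  -- the point (a, 0) is an approximate maximizer
  have hJa0 : ‖J (a, 0)‖ = 1 := by
    rw [hnormE, hJfst, hJsnd, ha, norm_zero]
    norm_num
  have hTa0 : 1 - η < ‖T (J (a, 0))‖ := by
    have : T (J (a, 0)) = c₁ := by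
      rw [hTapp, hJfst, hJsnd, hfa', map_zero, one_smul, zero_smul, add_zero]
    rw [this, hc₁def, norm_smul]
    have : ‖y + z‖ > 2 - η := hcon
    rw [Real.norm_eq_abs]
    rw [abs_of_nonneg (by norm_num : (0:ℝ) ≤ (2:ℝ)⁻¹)]
    linarith
  obtain ⟨S, x₀, ⟨w, hw⟩, hx₀1, hS1, hSx₀, hST, hxx₀⟩ := hmain T hT1 (J (a, 0)) hJa0 hTa0
  -- coordinates of x₀
  have hq : ‖x₀.snd‖ < ε' := by
    have h1 : ‖(J (a, 0) - x₀).snd‖ ≤ ‖J (a, 0) - x₀‖ := by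
      rw [hnormE]; exact le_max_right _ _
    have h2 : (J (a, 0) - x₀).snd = -x₀.snd := by
      show (0 : X₂) - x₀.snd = -x₀.snd
      rw [zero_sub]
    rw [h2, norm_neg] at h1
    linarith
  have hp : ‖x₀.fst‖ ≤ 1 := by
    rw [hnormE] at hx₀1
    rw [← hx₀1]
    exact le_max_left _ _
  -- the perturbation direction
  set d : E := J (0, b) with hddef
  have hd1 : ‖d‖ = 1 := by
    rw [hddef, hnormE, hJfst, hJsnd, hb, norm_zero]
    norm_num
  -- for 0 ≤ s ≤ 1 - ε', the points x₀ ± s • d are exact norm attainers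
  have hatt : ∀ s : ℝ, 0 ≤ s → s ≤ 1 - ε' → ‖x₀ + s • d‖ ≤ 1 ∧ ‖x₀ - s • d‖ ≤ 1 := by
    intro s hs0 hs1
    have hfst : ∀ t : ℝ, (x₀ + t • d).fst = x₀.fst := by
      intro t
      show x₀.fst + t • (0 : X₁) = x₀.fst
      rw [smul_zero, add_zero]
    have hsnd : ∀ t : ℝ, (x₀ + t • d).snd = x₀.snd + t • b := fun _ => rfl
    have key : ∀ t : ℝ, |t| ≤ 1 - ε' → ‖x₀ + t • d‖ ≤ 1 := by
      intro t ht
      rw [hnormE, hfst, hsnd]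
      have h1 : ‖x₀.snd + t • b‖ ≤ ‖x₀.snd‖ + |t| * ‖b‖ := by
        refine le_trans (norm_add_le _ _) ?_
        rw [norm_smul, Real.norm_eq_abs]
      rw [hb, mul_one] at h1
      have h2 : ‖x₀.snd + t • b‖ ≤ 1 := by linarith
      exact max_le hp h2
    constructor
    · exact key s (by rw [abs_of_nonneg hs0]; exact hs1)
    · have := key (-s) (by rw [abs_neg, abs_of_nonneg hs0]; exact hs1)
      rw [neg_smul, ← sub_eq_add_neg] at this
      exact this
  have hSnorm1 : ∀ s : ℝ, 0 < s → s ≤ 1 - ε' → ‖S (x₀ + s • d)‖ = 1 := by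
    intro s hs0 hs1
    obtain ⟨hplus, hminus⟩ := hatt s (le_of_lt hs0) hs1
    have hbplus : ‖S (x₀ + s • d)‖ ≤ 1 := by
      have := S.le_opNorm (x₀ + s • d)
      rw [hS1, one_mul] at this
      linarith
    have hbminus : ‖S (x₀ - s • d)‖ ≤ 1 := by
      have := S.le_opNorm (x₀ - s • d)
      rw [hS1, one_mul] at this
      linarith
    have hsum : S (x₀ + s • d) + S (x₀ - s • d) = S x₀ + S x₀ := by
      have e : (x₀ + s • d) + (x₀ - s • d) = x₀ + x₀ := by abel
      rw [← map_add, e, map_add]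
    have h2 : (2 : ℝ) ≤ ‖S (x₀ + s • d)‖ + ‖S (x₀ - s • d)‖ := by
      have := norm_add_le (S (x₀ + s • d)) (S (x₀ - s • d))
      rw [hsum] at this
      have h3 : ‖S x₀ + S x₀‖ = 2 := by
        rw [← two_smul ℝ (S x₀), norm_smul, hSx₀]
        norm_num
      linarith
    linarith
  -- exact attainers map to ± S w, hence S d = 0
  have hs₁pos : (0:ℝ) < 1 - ε' := by linarith
  obtain ⟨l₀, hl₀, hSx₀w⟩ := rse_rigid hw (le_of_eq hx₀1) (by rw [hSx₀, hS1])
  obtain ⟨l₁, hl₁, hS1w⟩ := rse_rigid hw (hatt (1 - ε') (le_of_lt hs₁pos) le_rfl).1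
    (by rw [hSnorm1 (1 - ε') hs₁pos le_rfl, hS1])
  obtain ⟨l₂, hl₂, hS2w⟩ := rse_rigid hw
    (hatt ((1 - ε') / 2) (by linarith) (by linarith)).1
    (by rw [hSnorm1 ((1 - ε') / 2) (by linarith) (by linarith), hS1])
  have hSw1 : ‖S w‖ = 1 := by rw [hw.2.1, hS1]
  have hexp : ∀ t : ℝ, S (x₀ + t • d) = S x₀ + t • S d := by
    intro t
    rw [map_add, map_smul]
  have heq1 : (1 - ε') • S d = (l₁ - l₀) • S w := by
    have h' : (1 - ε') • S d = l₁ • S w - l₀ • S w := by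
      rw [← hS1w, hexp, hSx₀w]
      abel
    rw [sub_smul l₁ l₀]
    exact h'
  have heq2 : ((1 - ε') / 2) • S d = (l₂ - l₀) • S w := by
    have h' : ((1 - ε') / 2) • S d = l₂ • S w - l₀ • S w := by
      rw [← hS2w, hexp, hSx₀w]
      abel
    rw [sub_smul l₂ l₀]
    exact h'
  have habs : ∀ l : ℝ, ‖l‖ = 1 → l = 1 ∨ l = -1 := by
    intro l hl
    rw [Real.norm_eq_abs] at hl
    rcases abs_cases l with ⟨h1, -⟩ | ⟨h1, -⟩
    · left; linarith
    · right; linarith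
  have hdiff : ∀ l l' : ℝ, ‖l‖ = 1 → ‖l'‖ = 1 → |l - l'| = 0 ∨ |l - l'| = 2 := by
    intro l l' hl hl'
    rcases habs l hl with h | h <;> rcases habs l' hl' with h' | h' <;>
      rw [h, h'] <;> norm_num
  have hn1 : (1 - ε') * ‖S d‖ = |l₁ - l₀| := by
    have := congrArg norm heq1
    rw [norm_smul, norm_smul, hSw1, mul_one, Real.norm_eq_abs, Real.norm_eq_abs,
      abs_of_pos hs₁pos] at this
    exact this
  have hn2 : ((1 - ε') / 2) * ‖S d‖ = |l₂ - l₀| := by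
    have := congrArg norm heq2
    rw [norm_smul, norm_smul, hSw1, mul_one, Real.norm_eq_abs, Real.norm_eq_abs,
      abs_of_pos (by linarith : (0:ℝ) < (1 - ε') / 2)] at this
    exact this
  have hSd0 : ‖S d‖ = 0 := by
    rcases hdiff l₁ l₀ hl₁ hl₀ with h | h
    · rw [h] at hn1
      have := mul_eq_zero.1 hn1
      rcases this with h' | h'
      · linarith
      · exact h'
    · rcases hdiff l₂ l₀ hl₂ hl₀ with h' | h'
      · rw [h'] at hn2
        rcases mul_eq_zero.1 hn2 with h'' | h''
        · linarith
        · exact h''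
      · exfalso
        rw [h] at hn1
        rw [h'] at hn2
        nlinarith [norm_nonneg (S d)]
  -- contradiction: ‖c₂‖ < ε' but ‖c₂‖ ≥ ε / 2 > ε'
  have hTd : T d = c₂ := by
    rw [hTapp, hddef, hJfst, hJsnd, hgb', map_zero, zero_smul, one_smul, zero_add]
  have hc₂small : ‖c₂‖ < ε' := by
    have h1 : ‖(S - T) d‖ ≤ ‖S - T‖ * ‖d‖ := (S - T).le_opNorm d
    rw [hd1, mul_one] at h1
    have h2 : (S - T) d = S d - T d := rfl
    have h3 : S d = 0 := by
      have := norm_eq_zero.1 hSd0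
      exact this
    rw [h2, h3, zero_sub, norm_neg, hTd] at h1
    linarith
  have hc₂big : ε / 2 ≤ ‖c₂‖ := by
    rw [hc₂def, norm_smul, Real.norm_eq_abs, abs_of_nonneg (by norm_num : (0:ℝ) ≤ (2:ℝ)⁻¹)]
    linarith
  linarith
end

section
/- The pair (ℓ₁², ℓ₁²) of real two-dimensional ℓ₁ spaces does not have the BPBp-RSE. -/
open Filter Topology

theorem WithLp.equiv_symm_fst {p : ENNReal} {α β : Type*} [AddCommGroup α] [AddCommGroup β]
    (x : α × β) : ((WithLp.equiv p (α × β)).symm x).fst = x.fst := rfl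

theorem WithLp.equiv_symm_snd {p : ENNReal} {α β : Type*} [AddCommGroup α] [AddCommGroup β]
    (x : α × β) : ((WithLp.equiv p (α × β)).symm x).snd = x.snd := rfl

private lemma l1norm (f : WithLp 1 (ℝ × ℝ)) : ‖f‖ = |f.fst| + |f.snd| := by
  rw [WithLp.prod_norm_eq_add (by norm_num)]
  simp [Real.norm_eq_abs]

set_option maxHeartbeats 1000000 in
theorem stmt_10 : ¬ BPBpRSE ℝ (WithLp 1 (ℝ × ℝ)) (WithLp 1 (ℝ × ℝ)) := by
  intro h
  obtain ⟨η, hη0, hη1, hmain⟩ := h (1/2) (by norm_num)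
  set e₁ : WithLp 1 (ℝ × ℝ) := (WithLp.equiv 1 (ℝ × ℝ)).symm (1, 0) with he₁def
  set e₂ : WithLp 1 (ℝ × ℝ) := (WithLp.equiv 1 (ℝ × ℝ)).symm (0, 1) with he₂def
  have he₁ : ‖e₁‖ = 1 := by
    rw [he₁def, l1norm, WithLp.equiv_symm_fst, WithLp.equiv_symm_snd]; norm_num
  have he₂ : ‖e₂‖ = 1 := by
    rw [he₂def, l1norm, WithLp.equiv_symm_fst, WithLp.equiv_symm_snd]; norm_num
  have : Nontrivial (WithLp 1 (ℝ × ℝ)) :=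
    ⟨e₁, 0, by intro hc; rw [hc, norm_zero] at he₁; norm_num at he₁⟩
  set T : WithLp 1 (ℝ × ℝ) →L[ℝ] WithLp 1 (ℝ × ℝ) :=
    ContinuousLinearMap.id ℝ (WithLp 1 (ℝ × ℝ)) with hTdef
  have hT : ‖T‖ = 1 := ContinuousLinearMap.norm_id
  set x : WithLp 1 (ℝ × ℝ) := (WithLp.equiv 1 (ℝ × ℝ)).symm (1/2, 1/2) with hxdef
  have hx : ‖x‖ = 1 := by
    rw [hxdef, l1norm, WithLp.equiv_symm_fst, WithLp.equiv_symm_snd,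
      abs_of_pos (by norm_num : (0:ℝ) < 1/2)]
    norm_num
  have hTx : ‖T x‖ = 1 := by rw [hTdef, ContinuousLinearMap.id_apply]; exact hx
  obtain ⟨S, x₀, ⟨x₀', hx₀'1, hSx₀', hseq⟩, hx₀1, hS1, hSx₀, hST, hxx₀⟩ :=
    hmain T hT x hx (by rw [hTx]; linarith)
  set a : ℝ := x₀.fst with haeq
  set b : ℝ := x₀.snd with hbeq
  -- components of x₀
  have hx₀sum : |a| + |b| = 1 := by rw [l1norm] at hx₀1; exact hx₀1
  have hdist : |1/2 - a| + |1/2 - b| < 1/2 := by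
    rw [l1norm, WithLp.sub_fst, WithLp.sub_snd, hxdef,
      WithLp.equiv_symm_fst, WithLp.equiv_symm_snd] at hxx₀
    exact hxx₀
  have ha : 0 < a := by
    have h1 : |1/2 - a| < 1/2 := by have := abs_nonneg (1/2 - b); linarith
    have := abs_lt.mp h1; linarith [this.2]
  have hb : 0 < b := by
    have h1 : |1/2 - b| < 1/2 := by have := abs_nonneg (1/2 - a); linarith
    have := abs_lt.mp h1; linarith [this.2]
  have hsum : a + b = 1 := by
    rw [abs_of_pos ha, abs_of_pos hb] at hx₀sum; exact hx₀sum
  have hdecomp : x₀ = a • e₁ + b • e₂ := by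
    apply WithLp.ofLp_injective; refine Prod.ext ?_ ?_
    · show a = (a • e₁ + b • e₂).fst
      rw [WithLp.add_fst, WithLp.smul_fst, WithLp.smul_fst, he₁def, he₂def,
        WithLp.equiv_symm_fst, WithLp.equiv_symm_fst]
      simp
    · show b = (a • e₁ + b • e₂).snd
      rw [WithLp.add_snd, WithLp.smul_snd, WithLp.smul_snd, he₁def, he₂def,
        WithLp.equiv_symm_snd, WithLp.equiv_symm_snd]
      simp
  have hb1 : ‖S e₁‖ ≤ 1 := by
    have := S.le_opNorm e₁; rw [he₁, hS1] at this; linarith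
  have hb2 : ‖S e₂‖ ≤ 1 := by
    have := S.le_opNorm e₂; rw [he₂, hS1] at this; linarith
  have key : 1 ≤ a * ‖S e₁‖ + b * ‖S e₂‖ := by
    calc (1:ℝ) = ‖S x₀‖ := hSx₀.symm
      _ = ‖a • S e₁ + b • S e₂‖ := by
          rw [hdecomp]; simp only [map_add, map_smul]
      _ ≤ ‖a • S e₁‖ + ‖b • S e₂‖ := norm_add_le _ _
      _ = a * ‖S e₁‖ + b * ‖S e₂‖ := by
          rw [norm_smul, norm_smul, Real.norm_eq_abs, Real.norm_eq_abs,
            abs_of_pos ha, abs_of_pos hb]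
  have hSe₁ : ‖S e₁‖ = 1 := by
    have h₁ : a * (1 - ‖S e₁‖) = 0 := by
      nlinarith [mul_nonneg ha.le (sub_nonneg.2 hb1), mul_nonneg hb.le (sub_nonneg.2 hb2)]
    rcases mul_eq_zero.mp h₁ with hc | hc
    · exact absurd hc ha.ne'
    · linarith
  have hSe₂ : ‖S e₂‖ = 1 := by
    have h₁ : b * (1 - ‖S e₂‖) = 0 := by
      nlinarith [mul_nonneg ha.le (sub_nonneg.2 hb1), mul_nonneg hb.le (sub_nonneg.2 hb2)]
    rcases mul_eq_zero.mp h₁ with hc | hc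
    · exact absurd hc hb.ne'
    · linarith
  -- constant maximizing sequences
  have hcons : ∀ e : WithLp 1 (ℝ × ℝ), ‖e‖ = 1 → ‖S e‖ = 1 →
      ∃ l : ℝ, (l = 1 ∨ l = -1) ∧ S e = l • S x₀' := by
    intro e hener he
    obtain ⟨σ, l, hσ, hl, hconv⟩ := hseq (fun _ => e) (fun _ => hener.le)
      (by
        have : (fun _ : ℕ => ‖S e‖) = fun _ : ℕ => ‖S‖ := by
          funext n; rw [he, hS1]
        rw [show (fun n : ℕ => ‖S ((fun _ : ℕ => e) n)‖) = fun _ : ℕ => ‖S e‖ from rfl, this]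
        exact tendsto_const_nhds)
    refine ⟨l, ?_, tendsto_nhds_unique tendsto_const_nhds hconv⟩
    rw [Real.norm_eq_abs] at hl
    rcases (abs_eq (by norm_num : (0:ℝ) ≤ 1)).mp hl with h1 | h1
    · exact Or.inl h1
    · exact Or.inr h1
  obtain ⟨l₁, hl₁, hSe₁'⟩ := hcons e₁ he₁ hSe₁
  obtain ⟨l₂, hl₂, hSe₂'⟩ := hcons e₂ he₂ hSe₂
  have hcase : S e₁ = S e₂ ∨ S e₁ = - S e₂ := by
    rcases hl₁ with h1 | h1 <;> rcases hl₂ with h2 | h2 <;>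
      rw [h1] at hSe₁' <;> rw [h2] at hSe₂' <;>
      simp only [one_smul, neg_one_smul] at hSe₁' hSe₂'
    · left; rw [hSe₁', hSe₂']
    · right; rw [hSe₁', hSe₂', neg_neg]
    · right; rw [hSe₁', hSe₂']
    · left; rw [hSe₁', hSe₂']
  have contra : ∀ v : WithLp 1 (ℝ × ℝ), ‖v‖ = 2 → S v ≠ 0 := by
    intro v hv hSv
    have h1 : ‖(S - T) v‖ ≤ ‖S - T‖ * ‖v‖ := (S - T).le_opNorm v
    have h2 : (S - T) v = - v := by
      rw [ContinuousLinearMap.sub_apply, hSv, hTdef, ContinuousLinearMap.id_apply, zero_sub]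
    rw [h2, norm_neg, hv] at h1
    nlinarith
  rcases hcase with hc | hc
  · refine contra (e₁ - e₂) ?_ ?_
    · rw [l1norm, WithLp.sub_fst, WithLp.sub_snd, he₁def, he₂def,
        WithLp.equiv_symm_fst, WithLp.equiv_symm_snd,
        WithLp.equiv_symm_fst, WithLp.equiv_symm_snd]
      norm_num
    · rw [map_sub, hc, sub_self]
  · refine contra (e₁ + e₂) ?_ ?_
    · rw [l1norm, WithLp.add_fst, WithLp.add_snd, he₁def, he₂def,
        WithLp.equiv_symm_fst, WithLp.equiv_symm_snd,
        WithLp.equiv_symm_fst, WithLp.equiv_symm_snd]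
      norm_num
    · rw [map_add, hc, neg_add_cancel]
end

section
/- Let X, Y be Banach spaces and suppose every point of S_X is a strongly exposed point of B_X. If the pair (X, Y) has the Bishop–Phelps–Bollobás property (BPBp), then (X, Y) has the BPBp-ASE; in particular it has the BPBp-RSE. -/
open Filter Topology

section Aux

open RCLike

variable {𝕜 X Y : Type*} [RCLike 𝕜] [NormedAddCommGroup X] [NormedSpace 𝕜 X]
  [NormedAddCommGroup Y] [NormedSpace 𝕜 Y]

lemma exists_normalized_exposer (x₀ : X) (hx₀ : ‖x₀‖ = 1)
    (hsep : StronglyExposedPoint 𝕜 x₀) :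
    ∃ g : X →L[𝕜] 𝕜, g x₀ = 1 ∧ (∀ z : X, ‖g z‖ ≤ ‖z‖) ∧
      ∀ u : ℕ → X, (∀ n, ‖u n‖ ≤ 1) →
        Filter.Tendsto (fun n => RCLike.re (g (u n))) Filter.atTop (nhds 1) →
        Filter.Tendsto u Filter.atTop (nhds x₀) := by
  obtain ⟨f, hf0, _, hmax, hconv⟩ := hsep
  set M : ℝ := RCLike.re (f x₀) with hM
  have hM0 : 0 ≤ M := by
    have := hmax 0 (by simp)
    simpa using this
  have hMb : ∀ z : X, ‖z‖ ≤ 1 → ‖f z‖ ≤ M := by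
    intro z hz
    by_cases hfz : f z = 0
    · simpa [hfz] using hM0
    · set μ : 𝕜 := (‖f z‖ : 𝕜) / f z with hμdef
      have hμ : ‖μ‖ = 1 := by
        rw [hμdef, norm_div, RCLike.norm_ofReal, abs_of_nonneg (norm_nonneg _)]
        exact div_self (norm_ne_zero_iff.2 hfz)
      have hball : ‖μ • z‖ ≤ 1 := by rw [norm_smul, hμ, one_mul]; exact hz
      have hfe : f (μ • z) = (‖f z‖ : 𝕜) := by
        rw [map_smul, smul_eq_mul, hμdef, div_mul_eq_mul_div, mul_div_assoc,
          div_self hfz, mul_one]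
      have := hmax (μ • z) hball
      rw [hfe] at this
      simpa using this
  have hMpos : 0 < M := by
    obtain ⟨z, hz⟩ : ∃ z : X, f z ≠ 0 := by
      by_contra hc
      push_neg at hc
      exact hf0 (ContinuousLinearMap.ext fun z => by simp [hc z])
    have hz0 : z ≠ 0 := fun h => hz (by simp [h])
    have hznorm : (0:ℝ) < ‖z‖ := norm_pos_iff.2 hz0
    have hw : ‖((‖z‖⁻¹ : ℝ) : 𝕜) • z‖ ≤ 1 := by
      rw [norm_smul, RCLike.norm_ofReal, abs_of_pos (by positivity),
        inv_mul_cancel₀ (ne_of_gt hznorm)]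
    have := hMb _ hw
    rw [map_smul, norm_smul, RCLike.norm_ofReal, abs_of_pos (by positivity)] at this
    have h1 : 0 < ‖z‖⁻¹ * ‖f z‖ := mul_pos (by positivity) (norm_pos_iff.2 hz)
    linarith
  have hfx₀norm : ‖f x₀‖ = M := by
    refine le_antisymm (hMb x₀ hx₀.le) ?_
    rw [hM]
    exact RCLike.re_le_norm (f x₀)
  have him : RCLike.im (f x₀) = 0 := by
    have h1 : ‖f x₀‖ ^ 2 = RCLike.re (f x₀) ^ 2 + RCLike.im (f x₀) ^ 2 := by
      rw [RCLike.norm_sq_eq_def]; ring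
    rw [hfx₀norm, ← hM] at h1
    nlinarith [sq_nonneg (RCLike.im (f x₀))]
  have hfx₀ : f x₀ = (M : 𝕜) := by
    apply RCLike.ext
    · simp [← hM]
    · simp [him]
  have hMne : (M : 𝕜) ≠ 0 := by exact_mod_cast ne_of_gt hMpos
  set g : X →L[𝕜] 𝕜 := ((M : 𝕜)⁻¹) • f with hgdef
  have hgapp : ∀ z, g z = (M : 𝕜)⁻¹ * f z := fun z => rfl
  refine ⟨g, ?_, ?_, ?_⟩
  · rw [hgapp, hfx₀, inv_mul_cancel₀ hMne]
  · intro z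
    have hfb : ‖f z‖ ≤ M * ‖z‖ := by
      by_cases hz0 : z = 0
      · simp [hz0]
      · have hzpos : (0:ℝ) < ‖z‖ := norm_pos_iff.2 hz0
        have hw : ‖((‖z‖⁻¹ : ℝ) : 𝕜) • z‖ ≤ 1 := by
          rw [norm_smul, RCLike.norm_ofReal, abs_of_pos (by positivity),
            inv_mul_cancel₀ (ne_of_gt hzpos)]
        have h1 := hMb _ hw
        rw [map_smul, norm_smul, RCLike.norm_ofReal, abs_of_pos (by positivity)] at h1
        calc ‖f z‖ = ‖z‖ * (‖z‖⁻¹ * ‖f z‖) := by field_simp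
          _ ≤ ‖z‖ * M := mul_le_mul_of_nonneg_left h1 (norm_nonneg z)
          _ = M * ‖z‖ := mul_comm _ _
    rw [hgapp, norm_mul, norm_inv, RCLike.norm_ofReal, abs_of_pos hMpos,
      inv_mul_le_iff₀ hMpos]
    exact hfb
  · intro u hu hlim
    have h2 : ∀ n, RCLike.re (f (u n)) = M * RCLike.re (g (u n)) := by
      intro n
      rw [hgapp, ← RCLike.ofReal_inv, RCLike.re_ofReal_mul, ← mul_assoc,
        mul_inv_cancel₀ (ne_of_gt hMpos), one_mul]
    have h3 : Filter.Tendsto (fun n => M * RCLike.re (g (u n)))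
        Filter.atTop (nhds (M * 1)) := hlim.const_mul M
    rw [mul_one] at h3
    have h4 : Filter.Tendsto (fun n => RCLike.re (f (u n))) Filter.atTop (nhds M) :=
      h3.congr fun n => (h2 n).symm
    exact hconv u hu h4

set_option maxHeartbeats 1000000 in
lemma aux_main (S : X →L[𝕜] Y) (x₀ : X) (hx₀ : ‖x₀‖ = 1) (hS : ‖S‖ = 1)
    (hSx₀ : ‖S x₀‖ = 1) (hsep : StronglyExposedPoint 𝕜 x₀) {r : ℝ} (hr : 0 < r) :
    ∃ U : X →L[𝕜] Y, ‖U‖ = 1 ∧ U x₀ = S x₀ ∧ ‖U - S‖ ≤ 2 * r ∧ ASEAt 𝕜 U x₀ := by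
  obtain ⟨g, hg1, hgb, hgconv⟩ := exists_normalized_exposer x₀ hx₀ hsep
  set ρ : 𝕜 := (r : 𝕜) with hρdef
  set G : X →L[𝕜] Y := g.smulRight (S x₀) with hGdef
  have hGapp : ∀ z, G z = g z • S x₀ := fun z => rfl
  have h1ρeq : (1 : 𝕜) + ρ = ((1 + r : ℝ) : 𝕜) := by push_cast [hρdef]; ring
  have h1ρ : (1 : 𝕜) + ρ ≠ 0 := by
    rw [h1ρeq]
    exact_mod_cast ne_of_gt (by linarith : (0:ℝ) < 1 + r)
  have hnorm1ρ : ‖(1:𝕜) + ρ‖ = 1 + r := by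
    rw [h1ρeq, RCLike.norm_ofReal, abs_of_pos (by linarith)]
  have hnormρ : ‖ρ‖ = r := by rw [hρdef, RCLike.norm_ofReal, abs_of_pos hr]
  set V : X →L[𝕜] Y := S + ρ • G with hVdef
  set U : X →L[𝕜] Y := ((1:𝕜) + ρ)⁻¹ • V with hUdef
  have hVU : ((1:𝕜) + ρ) • U = V := smul_inv_smul₀ h1ρ V
  have hVapp : ∀ z, V z = S z + ρ • (g z • S x₀) := fun z => rfl
  have hUx₀ : U x₀ = S x₀ := by
    have hV : V x₀ = ((1:𝕜) + ρ) • S x₀ := by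
      rw [hVapp, hg1, one_smul, add_smul, one_smul]
    rw [hUdef]
    simp only [ContinuousLinearMap.smul_apply, hV, smul_smul,
      inv_mul_cancel₀ h1ρ, one_smul]
  have hVle : ∀ z, ‖V z‖ ≤ (1 + r) * ‖z‖ := by
    intro z
    rw [hVapp]
    calc ‖S z + ρ • (g z • S x₀)‖ ≤ ‖S z‖ + ‖ρ • (g z • S x₀)‖ := norm_add_le _ _
      _ ≤ ‖z‖ + r * ‖z‖ := by
          gcongr
          · calc ‖S z‖ ≤ ‖S‖ * ‖z‖ := S.le_opNorm z
              _ = ‖z‖ := by rw [hS, one_mul]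
          · rw [norm_smul, hnormρ, norm_smul, hSx₀, mul_one]
            exact mul_le_mul_of_nonneg_left (hgb z) hr.le
      _ = (1 + r) * ‖z‖ := by ring
  have hUle : ‖U‖ ≤ 1 := by
    apply ContinuousLinearMap.opNorm_le_bound _ zero_le_one
    intro z
    have h1 : ‖U z‖ = (1 + r)⁻¹ * ‖V z‖ := by
      rw [hUdef]
      simp only [ContinuousLinearMap.smul_apply, norm_smul, norm_inv, hnorm1ρ]
    rw [h1, one_mul, inv_mul_le_iff₀ (by linarith : (0:ℝ) < 1 + r)]
    exact hVle z
  have hU1 : ‖U‖ = 1 := by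
    refine le_antisymm hUle ?_
    calc (1:ℝ) = ‖U x₀‖ := by rw [hUx₀, hSx₀]
      _ ≤ ‖U‖ * ‖x₀‖ := U.le_opNorm x₀
      _ = ‖U‖ := by rw [hx₀, mul_one]
  have hGle : ‖G‖ ≤ 1 := by
    apply ContinuousLinearMap.opNorm_le_bound _ zero_le_one
    intro z
    rw [hGapp, norm_smul, hSx₀, mul_one, one_mul]
    exact hgb z
  have hUS : ‖U - S‖ ≤ 2 * r := by
    have key : ((1:𝕜) + ρ) • (U - S) = ρ • (G - S) := by
      rw [smul_sub, hVU, hVdef]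
      module
    apply ContinuousLinearMap.opNorm_le_bound _ (by positivity)
    intro z
    have hz : ((1:𝕜) + ρ) • ((U - S) z) = ρ • ((G - S) z) := by
      have h0 := congrArg (fun (A : X →L[𝕜] Y) => A z) key
      simpa using h0
    have hnz := congrArg norm hz
    rw [norm_smul, norm_smul, hnorm1ρ, hnormρ] at hnz
    have hGSz : ‖(G - S) z‖ ≤ 2 * ‖z‖ := by
      rw [ContinuousLinearMap.sub_apply]
      calc ‖G z - S z‖ ≤ ‖G z‖ + ‖S z‖ := norm_sub_le _ _
        _ ≤ ‖z‖ + ‖z‖ := by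
            refine add_le_add ?_ ?_
            · rw [hGapp, norm_smul, hSx₀, mul_one]; exact hgb z
            · calc ‖S z‖ ≤ ‖S‖ * ‖z‖ := S.le_opNorm z
                _ = ‖z‖ := by rw [hS, one_mul]
        _ = 2 * ‖z‖ := by ring
    calc ‖(U - S) z‖ ≤ (1 + r) * ‖(U - S) z‖ :=
          le_mul_of_one_le_left (norm_nonneg _) (by linarith)
      _ = r * ‖(G - S) z‖ := hnz
      _ ≤ r * (2 * ‖z‖) := mul_le_mul_of_nonneg_left hGSz hr.le
      _ = 2 * r * ‖z‖ := by ring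
  refine ⟨U, hU1, hUx₀, hUS, hx₀, ?_⟩
  intro u hu hlim
  rw [hU1] at hlim
  -- ‖g (u n)‖ → 1
  have hVUu : ∀ n, (1 + r) * ‖U (u n)‖ = ‖V (u n)‖ := by
    intro n
    rw [← hVU]
    simp only [ContinuousLinearMap.smul_apply, norm_smul, hnorm1ρ]
  have hlow : ∀ n, ((1 + r) * ‖U (u n)‖ - 1) / r ≤ ‖g (u n)‖ := by
    intro n
    have hbound : ‖V (u n)‖ ≤ 1 + r * ‖g (u n)‖ := by
      rw [hVapp]
      refine (norm_add_le _ _).trans ?_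
      have e1 : ‖S (u n)‖ ≤ 1 := by
        calc ‖S (u n)‖ ≤ ‖S‖ * ‖u n‖ := S.le_opNorm _
          _ ≤ 1 := by rw [hS, one_mul]; exact hu n
      have e2 : ‖ρ • (g (u n) • S x₀)‖ = r * ‖g (u n)‖ := by
        rw [norm_smul, hnormρ, norm_smul, hSx₀, mul_one]
      rw [e2]; linarith
    rw [div_le_iff₀ hr, sub_le_iff_le_add, hVUu]
    linarith
  have hhigh : ∀ n, ‖g (u n)‖ ≤ 1 := fun n => (hgb (u n)).trans (hu n)
  have ha : Filter.Tendsto (fun n => ((1 + r) * ‖U (u n)‖ - 1) / r)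
      Filter.atTop (nhds 1) := by
    have h1 : Filter.Tendsto (fun n => ((1 + r) * ‖U (u n)‖ - 1) / r)
        Filter.atTop (nhds (((1 + r) * 1 - 1) / r)) :=
      (((hlim.const_mul (1 + r)).sub_const 1).div_const r)
    convert h1 using 2
    field_simp
    ring
  have hglim : Filter.Tendsto (fun n => ‖g (u n)‖) Filter.atTop (nhds 1) :=
    tendsto_of_tendsto_of_tendsto_of_le_of_le ha tendsto_const_nhds hlow hhigh
  set lam : ℕ → 𝕜 := fun n => if g (u n) = 0 then 1 else (‖g (u n)‖ : 𝕜)⁻¹ * g (u n)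
    with hlamdef
  have hlam : ∀ n, ‖lam n‖ = 1 := by
    intro n
    rw [hlamdef]
    by_cases hn : g (u n) = 0
    · simp [hn]
    · simp only [if_neg hn, norm_mul, norm_inv, RCLike.norm_ofReal,
        abs_of_nonneg (norm_nonneg _)]
      rw [inv_mul_cancel₀ (norm_ne_zero_iff.2 hn)]
  have hmem : ∀ n, lam n ∈ Metric.sphere (0:𝕜) 1 := by
    intro n
    simp [Metric.mem_sphere, dist_zero_right, hlam n]
  obtain ⟨l, hl, σ, hσ, hconvl⟩ := (isCompact_sphere (0:𝕜) 1).tendsto_subseq hmem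
  have hl1 : ‖l‖ = 1 := by simpa [Metric.mem_sphere, dist_zero_right] using hl
  set w : ℕ → X := fun n => (starRingEnd 𝕜 (lam (σ n))) • u (σ n) with hwdef
  have hw : ∀ n, ‖w n‖ ≤ 1 := by
    intro n
    rw [hwdef]
    simp only [norm_smul, RCLike.norm_conj, hlam, one_mul]
    exact hu (σ n)
  have hglimσ : Filter.Tendsto (fun n => ‖g (u (σ n))‖) Filter.atTop (nhds 1) :=
    hglim.comp hσ.tendsto_atTop
  have heventual : ∀ᶠ n in Filter.atTop, g (u (σ n)) ≠ 0 := by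
    filter_upwards [hglimσ.eventually (eventually_gt_nhds (by norm_num : (0:ℝ) < 1))]
      with n hn
    exact norm_pos_iff.1 hn
  have hrew : ∀ᶠ n in Filter.atTop,
      RCLike.re (g (w n)) = ‖g (u (σ n))‖ := by
    filter_upwards [heventual] with n hn
    have h1 : g (w n) = (‖g (u (σ n))‖ : 𝕜) := by
      rw [hwdef]
      simp only [map_smul, smul_eq_mul]
      rw [hlamdef]
      simp only [if_neg hn, map_mul, map_inv₀, RCLike.conj_ofReal]
      rw [mul_assoc, RCLike.conj_mul, pow_two,
        inv_mul_cancel_left₀ (by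
          exact_mod_cast norm_ne_zero_iff.2 hn : (‖g (u (σ n))‖ : 𝕜) ≠ 0)]
    rw [h1, RCLike.ofReal_re]
  have hre : Filter.Tendsto (fun n => RCLike.re (g (w n))) Filter.atTop (nhds 1) :=
    hglimσ.congr' (hrew.mono fun n h => h.symm)
  have hwto : Filter.Tendsto w Filter.atTop (nhds x₀) := hgconv w hw hre
  refine ⟨σ, l, hσ, hl1, ?_⟩
  have huw : ∀ n, u (σ n) = lam (σ n) • w n := by
    intro n
    rw [hwdef, smul_smul, RCLike.mul_conj]
    rw [hlam (σ n)]
    simp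
  have : Filter.Tendsto (fun n => lam (σ n) • w n) Filter.atTop (nhds (l • x₀)) :=
    Filter.Tendsto.smul hconvl hwto
  exact this.congr fun n => (huw n).symm

lemma aseAt_rseAt (S : X →L[𝕜] Y) (x₀ : X) (hA : ASEAt 𝕜 S x₀)
    (h : ‖S x₀‖ = ‖S‖) : RSEAt 𝕜 S x₀ := by
  refine ⟨hA.1, h, fun u hu hl => ?_⟩
  obtain ⟨σ, l, hσ, hl1, hc⟩ := hA.2 u hu hl
  refine ⟨σ, l, hσ, hl1, ?_⟩
  have := ((S.continuous.tendsto _).comp hc)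
  simpa [map_smul, Function.comp_def] using this

end Aux

theorem stmt_12' {𝕜 X Y : Type*} [RCLike 𝕜] [NormedAddCommGroup X] [NormedSpace 𝕜 X]
    [NormedAddCommGroup Y] [NormedSpace 𝕜 Y] [CompleteSpace X] [CompleteSpace Y]
    (hstr : ∀ x : X, ‖x‖ = 1 → StronglyExposedPoint 𝕜 x)
    (h : BPBp 𝕜 X Y) : BPBpASE 𝕜 X Y ∧ BPBpRSE 𝕜 X Y := by
  have key : ∀ ε > (0:ℝ), ∃ η : ℝ, 0 < η ∧ η < ε ∧
      ∀ T : X →L[𝕜] Y, ‖T‖ = 1 → ∀ x : X, ‖x‖ = 1 → 1 - η < ‖T x‖ →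
        ∃ (U : X →L[𝕜] Y) (x₀ : X), ASEAt 𝕜 U x₀ ∧ ‖x₀‖ = 1 ∧ ‖U‖ = 1 ∧
          ‖U x₀‖ = 1 ∧ ‖U - T‖ < ε ∧ ‖x - x₀‖ < ε := by
    intro ε hε
    obtain ⟨η, hη0, hηlt, hB⟩ := h (ε / 2) (by linarith)
    refine ⟨η, hη0, by linarith, ?_⟩
    intro T hT x hx hTx
    obtain ⟨S, x₀, hx₀, hS1, hSx₀, hST, hxx₀⟩ := hB T hT x hx hTx
    obtain ⟨U, hU1, hUx₀, hUS, hASE⟩ :=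
      aux_main S x₀ hx₀ hS1 hSx₀ (hstr x₀ hx₀) (by linarith : (0:ℝ) < ε / 8)
    refine ⟨U, x₀, hASE, hx₀, hU1, by rw [hUx₀]; exact hSx₀, ?_, by linarith⟩
    calc ‖U - T‖ ≤ ‖U - S‖ + ‖S - T‖ := norm_sub_le_norm_sub_add_norm_sub _ _ _
      _ < 2 * (ε / 8) + ε / 2 := by exact add_lt_add_of_le_of_lt hUS hST
      _ < ε := by linarith
  constructor
  · intro ε hε
    obtain ⟨η, hη0, hηlt, hk⟩ := key ε hε
    refine ⟨η, hη0, hηlt, ?_⟩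
    intro T hT x hx hTx
    obtain ⟨U, x₀, hASE, hx₀, hU1, hUx₀, hUT, hxx₀⟩ := hk T hT x hx hTx
    exact ⟨U, x₀, ⟨x₀, hASE⟩, hx₀, hU1, hUx₀, hUT, hxx₀⟩
  · intro ε hε
    obtain ⟨η, hη0, hηlt, hk⟩ := key ε hε
    refine ⟨η, hη0, hηlt, ?_⟩
    intro T hT x hx hTx
    obtain ⟨U, x₀, hASE, hx₀, hU1, hUx₀, hUT, hxx₀⟩ := hk T hT x hx hTx
    exact ⟨U, x₀, ⟨x₀, aseAt_rseAt U x₀ hASE (by rw [hUx₀, hU1])⟩,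
      hx₀, hU1, hUx₀, hUT, hxx₀⟩


theorem stmt_12 {𝕜 X Y : Type*} [RCLike 𝕜] [NormedAddCommGroup X] [NormedSpace 𝕜 X]
    [NormedAddCommGroup Y] [NormedSpace 𝕜 Y] [CompleteSpace X] [CompleteSpace Y]
    (hstr : ∀ x : X, ‖x‖ = 1 → StronglyExposedPoint 𝕜 x)
    (h : BPBp 𝕜 X Y) : BPBpASE 𝕜 X Y ∧ BPBpRSE 𝕜 X Y := by
  exact stmt_12' hstr h
end

section
/- Let X be a Banach space such that the identity pair (X, X) has the BPBp-RSE. Then the strongly exposed points of B_X are dense in S_X. -/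
open Filter Topology

set_option maxHeartbeats 1000000 in
theorem stmt_14 {𝕜 X : Type*} [RCLike 𝕜] [NormedAddCommGroup X] [NormedSpace 𝕜 X]
    [CompleteSpace X] (h : BPBpRSE 𝕜 X X) :
    ∀ x : X, ‖x‖ = 1 → ∀ ε > (0:ℝ),
      ∃ y : X, ‖y‖ = 1 ∧ StronglyExposedPoint 𝕜 y ∧ ‖x - y‖ < ε := by
  intro x hx ε hε
  haveI : Nontrivial X := nontrivial_of_ne x 0 (by
    intro h0; rw [h0, norm_zero] at hx; norm_num at hx)
  set ε' := min ε (1/2) with hε'def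
  have hε'pos : 0 < ε' := lt_min hε (by norm_num)
  obtain ⟨η, hη0, hηε, hmain⟩ := h ε' hε'pos
  have hid : ‖(ContinuousLinearMap.id 𝕜 X)‖ = 1 := ContinuousLinearMap.norm_id
  obtain ⟨S, x₀, hRSE, hx₀, hS, hSx₀, hST, hxx₀⟩ :=
    hmain _ hid x hx (by simpa [hx] using by linarith)
  refine ⟨x₀, hx₀, ?_, lt_of_lt_of_le hxx₀ (min_le_left _ _)⟩
  -- S is invertible
  have hS1 : ‖(1 : X →L[𝕜] X) - S‖ < 1 := by
    rw [norm_sub_rev, ContinuousLinearMap.one_def]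
    calc ‖S - ContinuousLinearMap.id 𝕜 X‖ < ε' := hST
      _ ≤ 1/2 := min_le_right _ _
      _ < 1 := by norm_num
  let U : (X →L[𝕜] X)ˣ := Units.oneSub _ hS1
  have hUval : (U : X →L[𝕜] X) = S := sub_sub_cancel 1 S
  have hRS : ∀ z : X, (↑U⁻¹ : X →L[𝕜] X) (S z) = z := by
    intro z
    have h1 : (↑U⁻¹ * ↑U : X →L[𝕜] X) = 1 := U.inv_mul
    rw [hUval] at h1
    calc (↑U⁻¹ : X →L[𝕜] X) (S z) = ((↑U⁻¹ * S : X →L[𝕜] X)) z := rfl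
      _ = z := by rw [h1]; rfl
  obtain ⟨x₁, hx₁, hSx₁, hkey⟩ := hRSE
  -- S x₀ = l₀ • S x₁ for some l₀ of norm 1
  obtain ⟨σ₀, l₀, hσ₀, hl₀, hlim₀⟩ :=
    hkey (fun _ => x₀) (fun _ => hx₀.le)
      (by simpa [hSx₀, hS] using (tendsto_const_nhds : Tendsto (fun _ : ℕ => (1:ℝ)) atTop _))
  have hSx0eq : S x₀ = l₀ • S x₁ :=
    tendsto_nhds_unique (tendsto_const_nhds : Tendsto (fun _ : ℕ => S x₀) atTop _) hlim₀
  have hl₀ne : l₀ ≠ 0 := by intro h0; rw [h0, norm_zero] at hl₀; norm_num at hl₀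
  have hSx₁eq : S x₁ = l₀⁻¹ • S x₀ := by
    rw [hSx0eq, smul_smul, inv_mul_cancel₀ hl₀ne, one_smul]
  -- norming functional
  have hSx₀ne : S x₀ ≠ 0 := by
    intro h0; rw [h0, norm_zero] at hSx₀; norm_num at hSx₀
  obtain ⟨g, hg, hgSx₀⟩ := exists_dual_vector 𝕜 (S x₀) (norm_ne_zero_iff.mpr hSx₀ne)
  set f : X →L[𝕜] 𝕜 := g.comp S with hfdef
  have hfx₀ : f x₀ = 1 := by
    simp only [hfdef, ContinuousLinearMap.comp_apply, hgSx₀, hSx₀, RCLike.ofReal_one]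
  have hfle : ∀ z : X, ‖z‖ ≤ 1 → RCLike.re (f z) ≤ 1 := by
    intro z hz
    calc RCLike.re (f z) ≤ ‖f z‖ := RCLike.re_le_norm _
      _ = ‖g (S z)‖ := rfl
      _ ≤ ‖g‖ * ‖S z‖ := g.le_opNorm _
      _ ≤ 1 * (‖S‖ * ‖z‖) := by
          exact mul_le_mul hg.le (S.le_opNorm z) (norm_nonneg _)
            (by norm_num)
      _ ≤ 1 := by rw [one_mul, hS, one_mul]; exact hz
  refine ⟨f, ?_, hx₀.le, ?_, ?_⟩
  · intro h0
    rw [h0] at hfx₀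
    simp at hfx₀
  · intro z hz
    rw [hfx₀, RCLike.one_re]
    exact hfle z hz
  · -- maximizing sequences converge
    intro u hu hulim
    rw [hfx₀, RCLike.one_re] at hulim
    apply tendsto_of_subseq_tendsto
    intro ns hns
    have hvnorm : ∀ n, ‖u (ns n)‖ ≤ 1 := fun n => hu (ns n)
    have hvlim : Tendsto (fun n => RCLike.re (f (u (ns n)))) atTop (𝓝 1) :=
      hulim.comp hns
    -- ‖S (u (ns n))‖ → ‖S‖
    have hSulim : Tendsto (fun n => ‖S (u (ns n))‖) atTop (𝓝 ‖S‖) := by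
      rw [hS]
      refine tendsto_of_tendsto_of_tendsto_of_le_of_le hvlim tendsto_const_nhds
        (fun n => ?_) (fun n => ?_)
      · calc RCLike.re (f (u (ns n))) ≤ ‖f (u (ns n))‖ := RCLike.re_le_norm _
          _ = ‖g (S (u (ns n)))‖ := rfl
          _ ≤ ‖g‖ * ‖S (u (ns n))‖ := g.le_opNorm _
          _ = ‖S (u (ns n))‖ := by rw [hg, one_mul]
      · calc ‖S (u (ns n))‖ ≤ ‖S‖ * ‖u (ns n)‖ := S.le_opNorm _
          _ ≤ 1 * 1 := mul_le_mul hS.le (hvnorm n) (norm_nonneg _) (by norm_num)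
          _ = 1 := by norm_num
    obtain ⟨σ, l, hσ, hl, hlim⟩ := hkey (fun n => u (ns n)) hvnorm hSulim
    set c : 𝕜 := l * l₀⁻¹ with hcdef
    have hc : ‖c‖ = 1 := by
      rw [hcdef, norm_mul, norm_inv, hl, hl₀]; norm_num
    have hlim' : Tendsto (fun n => S (u (ns (σ n)))) atTop (𝓝 (S (c • x₀))) := by
      have : l • S x₁ = S (c • x₀) := by
        rw [hSx₁eq, smul_smul, map_smul]
      rwa [this] at hlim
    -- apply the inverse
    have huconv : Tendsto (fun n => u (ns (σ n))) atTop (𝓝 (c • x₀)) := by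
      have := ((↑U⁻¹ : X →L[𝕜] X).continuous.tendsto _).comp hlim'
      simpa only [Function.comp_def, hRS] using this
    -- identify c = 1
    have hrec : RCLike.re c = 1 := by
      have h1 : Tendsto (fun n => RCLike.re (f (u (ns (σ n))))) atTop
          (𝓝 (RCLike.re (f (c • x₀)))) :=
        ((RCLike.continuous_re.comp f.continuous).tendsto _).comp huconv
      have h2 : Tendsto (fun n => RCLike.re (f (u (ns (σ n))))) atTop (𝓝 1) :=
        hvlim.comp hσ.tendsto_atTop
      have h3 := tendsto_nhds_unique h1 h2
      rwa [map_smul, hfx₀, smul_eq_mul, mul_one] at h3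
    have hceq : c = 1 := by
      have hnsq : RCLike.re c * RCLike.re c + RCLike.im c * RCLike.im c = 1 := by
        have h4 : ‖c‖ ^ 2 = RCLike.re c * RCLike.re c + RCLike.im c * RCLike.im c :=
          RCLike.norm_sq_eq_def
        rw [hc] at h4; simpa using h4.symm
      have him : RCLike.im c = 0 := by
        rw [hrec] at hnsq; nlinarith [mul_self_nonneg (RCLike.im c)]
      apply RCLike.ext <;> simp [hrec, him]
    rw [hceq, one_smul] at huconv
    exact ⟨σ, huconv⟩
end

section
/- Let X, Y be Banach spaces, and suppose the pair (X₁ ⊕₁ X₂, Y) has the BPBp-RSE with function η(ε) for ε ∈ (0,1), where X = X₁ ⊕₁ X₂ is an ℓ₁-sum of two Banach spaces. Then the pair (X₁, Y) has the BPBp-RSE with the same function η. -/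
open Filter Topology

theorem stmt_15 {𝕜 X₁ X₂ Y : Type*} [RCLike 𝕜]
    [NormedAddCommGroup X₁] [NormedSpace 𝕜 X₁] [CompleteSpace X₁]
    [NormedAddCommGroup X₂] [NormedSpace 𝕜 X₂] [CompleteSpace X₂]
    [NormedAddCommGroup Y] [NormedSpace 𝕜 Y] [CompleteSpace Y]
    (η : ℝ → ℝ) (h : BPBpRSEWith 𝕜 (WithLp 1 (X₁ × X₂)) Y η) :
    BPBpRSEWith 𝕜 X₁ Y η := by
  intro ε hε T hT x hx hTx
  set E := WithLp 1 (X₁ × X₂)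
  have hnorm : ∀ z : E, ‖z‖ = ‖z.fst‖ + ‖z.snd‖ := by
    intro z
    have h1 : (0:ℝ) < (1 : ENNReal).toReal := by simp
    rw [WithLp.prod_norm_eq_add h1]
    simp
  set ι : X₁ →L[𝕜] E :=
    ((WithLp.prodContinuousLinearEquiv 1 𝕜 X₁ X₂).symm.toContinuousLinearMap).comp
      (ContinuousLinearMap.inl 𝕜 X₁ X₂) with hι
  have hιfst : ∀ u : X₁, (ι u).fst = u := fun u => rfl
  have hιsnd : ∀ u : X₁, (ι u).snd = 0 := fun u => rfl
  have hιnorm : ∀ u : X₁, ‖ι u‖ = ‖u‖ := by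
    intro u; rw [hnorm, hιfst, hιsnd, norm_zero, add_zero]
  set Tt : E →L[𝕜] Y := T.comp
    ((ContinuousLinearMap.fst 𝕜 X₁ X₂).comp
      (WithLp.prodContinuousLinearEquiv 1 𝕜 X₁ X₂).toContinuousLinearMap) with hTt
  have hTtapp : ∀ z : E, Tt z = T z.fst := fun z => rfl
  have hTtnorm : ‖Tt‖ = 1 := by
    apply le_antisymm
    · apply ContinuousLinearMap.opNorm_le_bound _ zero_le_one
      intro z
      rw [hTtapp, one_mul, hnorm]
      calc ‖T z.fst‖ ≤ ‖T‖ * ‖z.fst‖ := T.le_opNorm _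
        _ = ‖z.fst‖ := by rw [hT, one_mul]
        _ ≤ ‖z.fst‖ + ‖z.snd‖ := le_add_of_nonneg_right (norm_nonneg _)
    · rw [← hT]
      apply ContinuousLinearMap.opNorm_le_bound _ (norm_nonneg _)
      intro u
      have : T u = Tt (ι u) := rfl
      rw [this, ← hιnorm u]
      exact Tt.le_opNorm _
  have hιx : ‖ι x‖ = 1 := by rw [hιnorm, hx]
  have hTtιx : Tt (ι x) = T x := rfl
  obtain ⟨St, z₀, hRSE, hz₀, hStnorm, hStz₀, hdist, hclose⟩ :=
    h ε hε Tt hTtnorm (ι x) hιx (by rw [hTtιx]; exact hTx)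
  set a := z₀.fst with ha
  set b := z₀.snd with hb
  have hab : ‖a‖ + ‖b‖ = 1 := by rw [← hnorm]; exact hz₀
  have hxab : ‖x - a‖ + ‖b‖ < ε := by
    have e1 : (ι x - z₀).fst = x - a := rfl
    have e2 : (ι x - z₀).snd = 0 - b := rfl
    have : ‖ι x - z₀‖ = ‖x - a‖ + ‖b‖ := by
      rw [hnorm, e1, e2, zero_sub, norm_neg]
    rw [← this]; exact hclose
  have hbε : ‖b‖ < ε := lt_of_le_of_lt (le_add_of_nonneg_left (norm_nonneg _)) hxab
  have hapos : (0:ℝ) < ‖a‖ := by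
    have : ‖a‖ = 1 - ‖b‖ := by linarith
    rw [this]; linarith [hε.2, hbε]
  -- split norm of S̃ z₀
  set ja : E := ι a with hja
  have hjb : St z₀ = St ja + St (z₀ - ja) := by
    rw [← map_add]
    congr 1
    abel
  have hnormjb : ‖z₀ - ja‖ = ‖b‖ := by
    have e1 : (z₀ - ja).fst = a - a := rfl
    have e2 : (z₀ - ja).snd = b - 0 := rfl
    rw [hnorm, e1, e2, sub_self, sub_zero, norm_zero, zero_add]
  have hStja_le : ‖St ja‖ ≤ ‖a‖ := by
    calc ‖St ja‖ ≤ ‖St‖ * ‖ja‖ := St.le_opNorm _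
      _ = ‖a‖ := by rw [hStnorm, one_mul, hja, hιnorm]
  have hStja : ‖St ja‖ = ‖a‖ := by
    refine le_antisymm hStja_le ?_
    have h1 : (1:ℝ) ≤ ‖St ja‖ + ‖b‖ := by
      calc (1:ℝ) = ‖St z₀‖ := hStz₀.symm
        _ ≤ ‖St ja‖ + ‖St (z₀ - ja)‖ := by rw [hjb]; exact norm_add_le _ _
        _ ≤ ‖St ja‖ + ‖b‖ := by
            have := St.le_opNorm (z₀ - ja)
            rw [hStnorm, one_mul, hnormjb] at this
            linarith
    linarith
  -- the new point and operator
  set c : 𝕜 := (‖a‖ : 𝕜) with hc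
  have hcnorm : ‖c‖ = ‖a‖ := by
    rw [hc, RCLike.norm_ofReal, abs_of_pos hapos]
  have hcne : c ≠ 0 := by
    intro h0; rw [h0] at hcnorm; simp at hcnorm; linarith
  set x₀ : X₁ := c⁻¹ • a with hx₀
  have hx₀norm : ‖x₀‖ = 1 := by
    rw [hx₀, norm_smul, norm_inv, hcnorm, inv_mul_cancel₀ hapos.ne']
  set S : X₁ →L[𝕜] Y := St.comp ι with hS
  have hSapp : ∀ u : X₁, S u = St (ι u) := fun _ => rfl
  have hSx₀ : ‖S x₀‖ = 1 := by
    have : S x₀ = c⁻¹ • St ja := by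
      rw [hSapp, hx₀, map_smul, hja, map_smul]
    rw [this, norm_smul, norm_inv, hcnorm, hStja, inv_mul_cancel₀ hapos.ne']
  have hSle : ∀ u : X₁, ‖S u‖ ≤ ‖u‖ := by
    intro u
    rw [hSapp]
    calc ‖St (ι u)‖ ≤ ‖St‖ * ‖ι u‖ := St.le_opNorm _
      _ = ‖u‖ := by rw [hStnorm, one_mul, hιnorm]
  have hSnorm : ‖S‖ = 1 := by
    refine le_antisymm (ContinuousLinearMap.opNorm_le_bound _ zero_le_one
      (fun u => by rw [one_mul]; exact hSle u)) ?_
    calc (1:ℝ) = ‖S x₀‖ := hSx₀.symm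
      _ ≤ ‖S‖ * ‖x₀‖ := S.le_opNorm _
      _ = ‖S‖ := by rw [hx₀norm, mul_one]
  have hSTdist : ‖S - T‖ < ε := by
    have hb1 : ‖S - T‖ ≤ ‖St - Tt‖ := by
      apply ContinuousLinearMap.opNorm_le_bound _ (norm_nonneg _)
      intro u
      have e : (S - T) u = (St - Tt) (ι u) := rfl
      rw [e, ← hιnorm u]
      exact (St - Tt).le_opNorm _
    exact lt_of_le_of_lt hb1 hdist
  have hxx₀ : ‖x - x₀‖ < ε := by
    have hax₀ : ‖a - x₀‖ = ‖b‖ := by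
      have : a - x₀ = ((1 : 𝕜) - c⁻¹) • a := by
        rw [hx₀, sub_smul, one_smul]
      rw [this, norm_smul]
      have hle : ‖a‖ ≤ 1 := by
        have := norm_nonneg b; linarith
      have h1c : ‖(1:𝕜) - c⁻¹‖ = ‖a‖⁻¹ - 1 := by
        have : (1:𝕜) - c⁻¹ = ((1 - (‖a‖)⁻¹ : ℝ) : 𝕜) := by
          rw [hc]; push_cast; ring
        rw [this, RCLike.norm_ofReal, abs_of_nonpos]
        · ring
        · have : (1:ℝ) ≤ ‖a‖⁻¹ := (one_le_inv₀ hapos).mpr hle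
          linarith
      rw [h1c, sub_mul, inv_mul_cancel₀ hapos.ne', one_mul]
      linarith
    calc ‖x - x₀‖ ≤ ‖x - a‖ + ‖a - x₀‖ := norm_sub_le_norm_sub_add_norm_sub _ _ _
      _ = ‖x - a‖ + ‖b‖ := by rw [hax₀]
      _ < ε := hxab
  -- RSE
  obtain ⟨w, hw1, hw2, hw3⟩ := hRSE
  -- S̃ (ι x₀) = l' • St w
  have hconst : ∃ l' : 𝕜, ‖l'‖ = 1 ∧ S x₀ = l' • St w := by
    obtain ⟨σ', l', _, hl', hlim⟩ := hw3 (fun _ => ι x₀)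
      (fun _ => by rw [hιnorm, hx₀norm])
      (by
        have hcstv : ‖St (ι x₀)‖ = ‖St‖ := by rw [← hSapp x₀, hSx₀, hStnorm]
        rw [show (fun _ : ℕ => ‖St (ι x₀)‖) = fun _ : ℕ => ‖St‖ from
          funext fun _ => hcstv]
        exact tendsto_const_nhds)
    refine ⟨l', hl', ?_⟩
    have := tendsto_nhds_unique (tendsto_const_nhds (α := ℕ) (x := St (ι x₀))) hlim
    rw [hSapp]; exact this
  obtain ⟨l', hl'norm, hl'⟩ := hconst
  have hl'ne : l' ≠ 0 := by
    intro h0; rw [h0] at hl'norm; simp at hl'norm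
  have hRSES : RSE 𝕜 S := by
    refine ⟨x₀, hx₀norm, by rw [hSx₀, hSnorm], ?_⟩
    intro u hu hlim
    have hlim' : Tendsto (fun n => ‖St (ι (u n))‖) atTop (𝓝 ‖St‖) := by
      rw [hStnorm, ← hSnorm]
      exact hlim
    obtain ⟨σ, l, hσ, hlnorm, hl⟩ := hw3 (fun n => ι (u n))
      (fun n => by rw [hιnorm]; exact hu n) hlim'
    refine ⟨σ, l * l'⁻¹, hσ, by rw [norm_mul, norm_inv, hlnorm, hl'norm]; norm_num, ?_⟩
    have hw' : St w = l'⁻¹ • S x₀ := by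
      rw [hl', smul_smul, inv_mul_cancel₀ hl'ne, one_smul]
    have : (l * l'⁻¹) • S x₀ = l • St w := by
      rw [hw', smul_smul]
    rw [this]
    exact hl
  exact ⟨S, x₀, hRSES, hx₀norm, hSnorm, hSx₀, hSTdist, hxx₀⟩
end

section
/- Let X, Y₁, Y₂ be Banach spaces and Y = Y₁ ⊕∞ Y₂ the ℓ∞-sum. If the pair (X, Y) has the BPBp-RSE with function η(ε) for ε ∈ (0,1), then the pair (X, Y₁) has the BPBp-RSE with the same function η. -/
open Filter Topology

set_option maxHeartbeats 1000000 in
theorem stmt_16 {𝕜 X Y₁ Y₂ : Type*} [RCLike 𝕜]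
    [NormedAddCommGroup X] [NormedSpace 𝕜 X] [CompleteSpace X]
    [NormedAddCommGroup Y₁] [NormedSpace 𝕜 Y₁] [CompleteSpace Y₁]
    [NormedAddCommGroup Y₂] [NormedSpace 𝕜 Y₂] [CompleteSpace Y₂]
    (η : ℝ → ℝ) (h : BPBpRSEWith 𝕜 X (WithLp ⊤ (Y₁ × Y₂)) η) :
    BPBpRSEWith 𝕜 X Y₁ η := by
  intro ε hε T hT x hx hTx
  obtain ⟨hε0, hε1⟩ := hε
  set Jt : Y₁ →L[𝕜] WithLp ⊤ (Y₁ × Y₂) :=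
    ((WithLp.prodContinuousLinearEquiv ⊤ 𝕜 Y₁ Y₂).symm : (Y₁ × Y₂) →L[𝕜] _).comp
      (ContinuousLinearMap.inl 𝕜 Y₁ Y₂) with hJt
  set P : WithLp ⊤ (Y₁ × Y₂) →L[𝕜] Y₁ :=
    (ContinuousLinearMap.fst 𝕜 Y₁ Y₂).comp
      ((WithLp.prodContinuousLinearEquiv ⊤ 𝕜 Y₁ Y₂) : _ →L[𝕜] (Y₁ × Y₂)) with hP
  have hJfst : ∀ y : Y₁, (Jt y).fst = y := fun y => rfl
  have hJsnd : ∀ y : Y₁, (Jt y).snd = (0 : Y₂) := fun y => rfl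
  have hPapp : ∀ z : WithLp ⊤ (Y₁ × Y₂), P z = z.fst := fun z => rfl
  have hnorm : ∀ z : WithLp ⊤ (Y₁ × Y₂), ‖z‖ = ‖z.fst‖ ⊔ ‖z.snd‖ := fun z => rfl
  have hJnorm : ∀ y : Y₁, ‖Jt y‖ = ‖y‖ := by
    intro y
    rw [hnorm, hJfst, hJsnd, norm_zero, sup_eq_left.2 (norm_nonneg y)]
  have hPle : ∀ z : WithLp ⊤ (Y₁ × Y₂), ‖P z‖ ≤ ‖z‖ := by
    intro z; rw [hPapp, hnorm]; exact le_sup_left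
  set Tt : X →L[𝕜] WithLp ⊤ (Y₁ × Y₂) := Jt.comp T with hTt
  have hTtapp : ∀ v : X, ‖Tt v‖ = ‖T v‖ := fun v => hJnorm (T v)
  have hTtnorm : ‖Tt‖ = 1 := by
    refine le_antisymm (Tt.opNorm_le_bound zero_le_one fun v => ?_)
      ?_
    · rw [hTtapp, one_mul]
      have h2 := T.le_opNorm v
      rw [hT, one_mul] at h2
      exact h2
    · rw [← hT]
      refine T.opNorm_le_bound (norm_nonneg Tt) fun v => ?_
      rw [← hTtapp]; exact Tt.le_opNorm v
  have hTtx : 1 - η ε < ‖Tt x‖ := by rw [hTtapp]; exact hTx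
  obtain ⟨St, x₀, ⟨x₁, hx₁, hSx₁, hRSE⟩, hx₀, hStnorm, hStx₀, hStT, hxx₀⟩ :=
    h ε ⟨hε0, hε1⟩ Tt hTtnorm x hx hTtx
  set c : ℝ := ‖St - Tt‖ with hc
  have hc1 : c < 1 := lt_trans hStT hε1
  -- second component bound
  have hsnd : ∀ v : X, ‖v‖ ≤ 1 → ‖(St v).snd‖ ≤ c := by
    intro v hv
    have h1 : (St v).snd = ((St - Tt) v).snd := by
      show (St v).snd = (St v).snd - (Jt (T v)).snd
      rw [hJsnd (T v), sub_zero]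
    rw [h1]
    calc ‖((St - Tt) v).snd‖ ≤ ‖(St - Tt) v‖ := by rw [hnorm ((St - Tt) v)]; exact le_sup_right
      _ ≤ c * ‖v‖ := (St - Tt).le_opNorm v
      _ ≤ c := by
          nlinarith [norm_nonneg (St - Tt), hv]
  set S : X →L[𝕜] Y₁ := P.comp St with hS
  have hSapp : ∀ v : X, S v = (St v).fst := fun v => rfl
  have hSle : ∀ v : X, ‖S v‖ ≤ ‖St v‖ := by
    intro v; rw [hSapp, hnorm]; exact le_sup_left
  have hStle : ∀ v : X, ‖v‖ ≤ 1 → ‖St v‖ ≤ max ‖S v‖ c := by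
    intro v hv
    rw [hnorm, hSapp]
    exact sup_le_sup le_rfl (hsnd v hv)
  -- norm at a point where ‖St v‖ = 1
  have hpt : ∀ v : X, ‖v‖ ≤ 1 → ‖St v‖ = 1 → ‖S v‖ = 1 := by
    intro v hv h1
    refine le_antisymm (by rw [← h1]; exact hSle v) ?_
    have := hStle v hv
    rw [h1] at this
    by_contra h'
    push_neg at h'
    exact absurd this (not_le.2 (max_lt h' hc1))
  have hSx₀' : ‖S x₀‖ = 1 := hpt x₀ (le_of_eq hx₀) hStx₀
  have hSx₁' : ‖S x₁‖ = 1 := hpt x₁ (le_of_eq hx₁) (hStnorm ▸ hSx₁)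
  have hSnorm : ‖S‖ = 1 := by
    refine le_antisymm (S.opNorm_le_bound zero_le_one fun v => ?_) ?_
    · rw [one_mul]
      exact (hSle v).trans (by simpa [hStnorm] using St.le_opNorm v)
    · rw [← hSx₁']; exact S.unit_le_opNorm x₁ (le_of_eq hx₁)
  refine ⟨S, x₀, ⟨x₁, hx₁, by rw [hSx₁', hSnorm], ?_⟩, hx₀, hSnorm, hSx₀', ?_, hxx₀⟩
  · -- RSE property
    intro u hu htend
    have htend1 : Tendsto (fun n => ‖S (u n)‖) atTop (𝓝 1) := by rwa [hSnorm] at htend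
    have htendSt : Tendsto (fun n => ‖St (u n)‖) atTop (𝓝 ‖St‖) := by
      rw [hStnorm]
      have hup : Tendsto (fun n => max ‖S (u n)‖ c) atTop (𝓝 (max 1 c)) :=
        htend1.max tendsto_const_nhds
      rw [max_eq_left hc1.le] at hup
      exact tendsto_of_tendsto_of_tendsto_of_le_of_le htend1 hup
        (fun n => hSle (u n))
        (fun n => hStle (u n) (hu n))
    obtain ⟨σ, l, hσ, hl, hconv⟩ := hRSE u hu htendSt
    refine ⟨σ, l, hσ, hl, ?_⟩
    have := (P.continuous.tendsto _).comp hconv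
    simp only [Function.comp_def] at this
    have hPsmul : P (l • St x₁) = l • S x₁ := by rw [map_smul]; rfl
    rw [hPsmul] at this
    exact this
  · -- ‖S - T‖ < ε
    refine lt_of_le_of_lt ?_ hStT
    refine (S - T).opNorm_le_bound (norm_nonneg _) fun v => ?_
    have h1 : (S - T) v = ((St - Tt) v).fst := rfl
    rw [h1]
    calc ‖((St - Tt) v).fst‖ ≤ ‖(St - Tt) v‖ := by rw [hnorm ((St - Tt) v)]; exact le_sup_left
      _ ≤ ‖St - Tt‖ * ‖v‖ := (St - Tt).le_opNorm v
end
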